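/- arXiv:2001.05011 — 6 statements merged into one kernel-verified Lean document; each statement's English description precedes it below -/
import Mathlib

section
/- For a permutation w in the symmetric group S_n, the following are equivalent: (1) w avoids the patterns 321 and 3412; (2) some reduced word for w (as a product of adjacent transpositions σ_1,...,σ_{n-1}) has all distinct letters; (3) every reduced word for w has all distinct letters. -/
/-- The adjacent transposition `σ_{i+1} = (i+1, i+2)` (1-indexed), acting on `Fin n`;
here `i : Fin (n-1)` is the 0-indexed label, swapping positions `i` and `i+1`. -/
def sgen (n : ℕ) (i : Fin (n - 1)) : Equiv.Perm (Fin n) :=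
  Equiv.swap ⟨i.1, by have := i.2; omega⟩ ⟨i.1 + 1, by have := i.2; omega⟩

/-- `l` is a reduced word for `w`: its product is `w` and no shorter word of
adjacent transpositions has product `w`. -/
def IsReducedWord (n : ℕ) (w : Equiv.Perm (Fin n)) (l : List (Fin (n - 1))) : Prop :=
  (l.map (sgen n)).prod = w ∧
    ∀ l' : List (Fin (n - 1)), (l'.map (sgen n)).prod = w → l.length ≤ l'.length

/-- Bruhat order on `S_n` via the subword property: `v ≤ w` iff some reduced word
of `v` is a (not necessarily consecutive) subword of some reduced word of `w`. -/
def BruhatLe (n : ℕ) (v w : Equiv.Perm (Fin n)) : Prop :=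
  ∃ lw lv : List (Fin (n - 1)),
    IsReducedWord n w lw ∧ IsReducedWord n v lv ∧ lv.Sublist lw

/-- `w` contains the pattern `321`. -/
def Contains321 {n : ℕ} (w : Equiv.Perm (Fin n)) : Prop :=
  ∃ i j k : Fin n, i < j ∧ j < k ∧ w k < w j ∧ w j < w i

/-- `w` contains the pattern `3412`. -/
def Contains3412 {n : ℕ} (w : Equiv.Perm (Fin n)) : Prop :=
  ∃ i j k l : Fin n, i < j ∧ j < k ∧ k < l ∧ w k < w l ∧ w l < w i ∧ w i < w j

/-- `w` contains the pattern `231`. -/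
def Contains231 {n : ℕ} (w : Equiv.Perm (Fin n)) : Prop :=
  ∃ i j k : Fin n, i < j ∧ j < k ∧ w k < w i ∧ w i < w j

/-- `w` contains the pattern `312`. -/
def Contains312 {n : ℕ} (w : Equiv.Perm (Fin n)) : Prop :=
  ∃ i j k : Fin n, i < j ∧ j < k ∧ w j < w k ∧ w k < w i

namespace BoolPerm

open Finset Equiv

variable {n : ℕ}

/-- position `i` of a letter, as an element of `Fin n`. -/
def cpos (c : Fin (n - 1)) : Fin n := ⟨c.1, by have := c.2; omega⟩

/-- position `i+1` of a letter. -/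
def spos (c : Fin (n - 1)) : Fin n := ⟨c.1 + 1, by have := c.2; omega⟩

lemma sgen_def (i : Fin (n - 1)) : sgen n i = Equiv.swap (cpos i) (spos i) := rfl

/-- `w` stabilizes the block `{0,…,c}`. -/
def StabC (c : Fin (n - 1)) (w : Equiv.Perm (Fin n)) : Prop :=
  ∀ a : Fin n, a.1 ≤ c.1 → (w a).1 ≤ c.1

/-- positions `≤ c` sent above `c`. -/
def OutS (c : Fin (n - 1)) (w : Equiv.Perm (Fin n)) : Finset (Fin n) :=
  univ.filter fun a => a.1 ≤ c.1 ∧ c.1 < (w a).1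

/-- positions `> c` sent to `≤ c`. -/
def InS (c : Fin (n - 1)) (w : Equiv.Perm (Fin n)) : Finset (Fin n) :=
  univ.filter fun b => c.1 < b.1 ∧ (w b).1 ≤ c.1

def NSet (w : Equiv.Perm (Fin n)) : Finset (Fin (n - 1)) :=
  univ.filter fun c => (OutS c w).Nonempty

def invNum (w : Equiv.Perm (Fin n)) : ℕ :=
  (univ.filter fun p : Fin n × Fin n => p.1 < p.2 ∧ w p.2 < w p.1).card

lemma mem_outS {c : Fin (n - 1)} {w : Equiv.Perm (Fin n)} {a : Fin n} :
    a ∈ OutS c w ↔ a.1 ≤ c.1 ∧ c.1 < (w a).1 := by simp [OutS]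

lemma mem_inS {c : Fin (n - 1)} {w : Equiv.Perm (Fin n)} {b : Fin n} :
    b ∈ InS c w ↔ c.1 < b.1 ∧ (w b).1 ≤ c.1 := by simp [InS]

lemma sgen_apply_of_ne (i : Fin (n - 1)) (a : Fin n) (h1 : a.1 ≠ i.1) (h2 : a.1 ≠ i.1 + 1) :
    sgen n i a = a := by
  rw [sgen_def]
  exact Equiv.swap_apply_of_ne_of_ne (fun h => h1 (by simpa [cpos, Fin.ext_iff] using h))
    (fun h => h2 (by simpa [spos, Fin.ext_iff] using h))

lemma sgen_cpos (i : Fin (n - 1)) : sgen n i (cpos i) = spos i := by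
  rw [sgen_def]; exact Equiv.swap_apply_left _ _

lemma sgen_spos (i : Fin (n - 1)) : sgen n i (spos i) = cpos i := by
  rw [sgen_def]; exact Equiv.swap_apply_right _ _

lemma sgen_mul_self (i : Fin (n - 1)) : sgen n i * sgen n i = 1 := by
  rw [sgen_def]; exact Equiv.swap_mul_self _ _

lemma stabC_one (c : Fin (n - 1)) : StabC c (1 : Equiv.Perm (Fin n)) := fun a ha => ha

lemma stabC_mul {c : Fin (n - 1)} {u v : Equiv.Perm (Fin n)} (hu : StabC c u)
    (hv : StabC c v) : StabC c (u * v) := fun a ha => hu _ (hv a ha)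

lemma stabC_sgen {c i : Fin (n - 1)} (h : i ≠ c) : StabC c (sgen n i) := by
  intro a ha
  have hic : i.1 ≠ c.1 := fun hh => h (Fin.ext hh)
  rcases eq_or_ne a.1 i.1 with h1 | h1
  · have : a = cpos i := Fin.ext h1
    rw [this, sgen_cpos]
    show i.1 + 1 ≤ c.1
    omega
  · rcases eq_or_ne a.1 (i.1 + 1) with h2 | h2
    · have : a = spos i := Fin.ext h2
      rw [this, sgen_spos]
      show i.1 ≤ c.1
      omega
    · rw [sgen_apply_of_ne i a h1 h2]; exact ha

lemma stabC_prod {c : Fin (n - 1)} {l : List (Fin (n - 1))} (h : ∀ x ∈ l, x ≠ c) :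
    StabC c (l.map (sgen n)).prod := by
  induction l with
  | nil => simpa using stabC_one c
  | cons a l ih =>
      simp only [List.map_cons, List.prod_cons]
      exact stabC_mul (stabC_sgen (h a (by simp))) (ih fun x hx => h x (by simp [hx]))

lemma stabC_inv {c : Fin (n - 1)} {w : Equiv.Perm (Fin n)} (h : StabC c w) : StabC c w⁻¹ := by
  classical
  set S : Finset (Fin n) := univ.filter fun a => a.1 ≤ c.1 with hS
  have hmapsto : ∀ a ∈ S, w a ∈ S := by
    intro a ha; simp only [hS, mem_filter, mem_univ, true_and] at ha ⊢; exact h a ha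
  have himg : S.image w = S := by
    apply Finset.eq_of_subset_of_card_le
    · intro b hb; simp only [Finset.mem_image] at hb; obtain ⟨a, ha, rfl⟩ := hb
      exact hmapsto a ha
    · rw [Finset.card_image_of_injective _ w.injective]
  intro b hb
  have hbS : b ∈ S := by simp [hS, hb]
  rw [← himg] at hbS
  simp only [Finset.mem_image] at hbS
  obtain ⟨a, ha, hab⟩ := hbS
  have : w⁻¹ b = a := by rw [← hab]; simp
  rw [this]
  simpa [hS] using ha

lemma stabC_val_lt {c : Fin (n - 1)} {w : Equiv.Perm (Fin n)} (h : StabC c w) {x : Fin n}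
    (hx : c.1 < x.1) : c.1 < (w x).1 := by
  by_contra hc
  push_neg at hc
  have := stabC_inv h (w x) hc
  simp at this
  omega

lemma outS_empty_iff {c : Fin (n - 1)} {w : Equiv.Perm (Fin n)} :
    OutS c w = ∅ ↔ StabC c w := by
  constructor
  · intro h a ha
    by_contra hc
    push_neg at hc
    have : a ∈ OutS c w := mem_outS.mpr ⟨ha, hc⟩
    simp [h] at this
  · intro h
    ext a
    simp only [mem_outS, Finset.notMem_empty, iff_false, not_and, not_lt]
    exact h a

lemma card_out_eq_card_in (c : Fin (n - 1)) (w : Equiv.Perm (Fin n)) :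
    (OutS c w).card = (InS c w).card := by
  classical
  have hc1 : c.1 + 1 ≤ n := by have := c.2; omega
  set X : Finset (Fin n) := univ.filter fun a => a.1 ≤ c.1 with hX
  set Y : Finset (Fin n) := univ.filter fun a => (w a).1 ≤ c.1 with hY
  have hXcard : X.card = c.1 + 1 := by
    have : X = Finset.Iic (⟨c.1, by omega⟩ : Fin n) := by
      ext a; simp [hX, Fin.le_def]
    rw [this, Fin.card_Iic]
  have hYcard : Y.card = c.1 + 1 := by
    have himg : Y.image w = Finset.Iic (⟨c.1, by omega⟩ : Fin n) := by
      ext b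
      simp only [Finset.mem_image, hY, mem_filter, mem_univ, true_and, Finset.mem_Iic,
        Fin.le_def]
      constructor
      · rintro ⟨a, ha, rfl⟩; exact ha
      · intro hb; exact ⟨w⁻¹ b, by simpa using hb, by simp⟩
    have := Finset.card_image_of_injective Y w.injective
    rw [himg, Fin.card_Iic] at this
    exact this.symm
  have hsplitX : (X.filter fun a => (w a).1 ≤ c.1).card
      + (X.filter fun a => ¬ (w a).1 ≤ c.1).card = X.card :=
    Finset.card_filter_add_card_filter_not _
  have hsplitY : (Y.filter fun a => a.1 ≤ c.1).card
      + (Y.filter fun a => ¬ a.1 ≤ c.1).card = Y.card :=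
    Finset.card_filter_add_card_filter_not _
  have hOut : OutS c w = X.filter fun a => ¬ (w a).1 ≤ c.1 := by
    ext a; simp only [mem_outS, hX, Finset.mem_filter, mem_univ, true_and, not_le]
  have hIn : InS c w = Y.filter fun a => ¬ a.1 ≤ c.1 := by
    ext a
    simp only [mem_inS, hY, Finset.mem_filter, mem_univ, true_and, not_le]
    tauto
  have hmid : X.filter (fun a => (w a).1 ≤ c.1) = Y.filter fun a => a.1 ≤ c.1 := by
    ext a
    simp only [hX, hY, Finset.filter_filter, Finset.mem_filter, mem_univ, true_and]
    tauto
  have hmidc : (X.filter fun a => (w a).1 ≤ c.1).card = (Y.filter fun a => a.1 ≤ c.1).card := by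
    rw [hmid]
  rw [hOut, hIn]
  omega

lemma sgen_val_le_iff {i c : Fin (n - 1)} (hic : i ≠ c) (x : Fin n) :
    (sgen n i x).1 ≤ c.1 ↔ x.1 ≤ c.1 := by
  constructor
  · intro h
    have := stabC_sgen (c := c) hic (sgen n i x) h
    rwa [show sgen n i (sgen n i x) = x by
      rw [← Equiv.Perm.mul_apply, sgen_mul_self]; rfl] at this
  · exact stabC_sgen hic x

lemma outS_sgen_mul_ne {c i : Fin (n - 1)} (h : i ≠ c) (w : Equiv.Perm (Fin n)) :
    OutS c (sgen n i * w) = OutS c w := by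
  ext a
  simp only [mem_outS, Equiv.Perm.mul_apply, ← not_le, sgen_val_le_iff h]

lemma outS_sgen_mul_self (c : Fin (n - 1)) (w : Equiv.Perm (Fin n)) :
    OutS c (sgen n c * w) ⊆ insert (w⁻¹ (cpos c)) (OutS c w) := by
  intro a ha
  rw [mem_outS] at ha
  obtain ⟨ha1, ha2⟩ := ha
  rcases le_or_gt (w a).1 c.1 with h | h
  · have hwa : w a = cpos c := by
      by_contra hne
      have h1 : (w a).1 ≠ c.1 := fun hh => hne (Fin.ext hh)
      have h2 : (w a).1 ≠ c.1 + 1 := by omega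
      rw [Equiv.Perm.mul_apply, sgen_apply_of_ne c _ h1 h2] at ha2
      omega
    have : a = w⁻¹ (cpos c) := by rw [← hwa]; simp
    simp [this]
  · exact Finset.mem_insert_of_mem (mem_outS.mpr ⟨ha1, h⟩)

lemma card_outS_le_count (c : Fin (n - 1)) (l : List (Fin (n - 1))) :
    (OutS c (l.map (sgen n)).prod).card ≤ l.count c := by
  induction l with
  | nil =>
      simp only [List.map_nil, List.prod_nil, List.count_nil]
      rw [outS_empty_iff.mpr (stabC_one c)]
      simp
  | cons a l ih =>
      simp only [List.map_cons, List.prod_cons]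
      rcases eq_or_ne c a with rfl | hne
      · calc (OutS c (sgen n c * (l.map (sgen n)).prod)).card
            ≤ (insert ((l.map (sgen n)).prod⁻¹ (cpos c)) (OutS c (l.map (sgen n)).prod)).card :=
              Finset.card_le_card (outS_sgen_mul_self c _)
          _ ≤ (OutS c (l.map (sgen n)).prod).card + 1 := Finset.card_insert_le _ _
          _ ≤ l.count c + 1 := by omega
          _ = (c :: l).count c := by simp
      · rw [outS_sgen_mul_ne hne.symm]
        calc (OutS c (l.map (sgen n)).prod).card ≤ l.count c := ih
          _ ≤ (a :: l).count c := by simp [List.count_cons]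
open List in
lemma card_outS_le_one_of_nodup {l : List (Fin (n - 1))} {w : Equiv.Perm (Fin n)}
    (hnd : l.Nodup) (hl : (l.map (sgen n)).prod = w) (c : Fin (n - 1)) :
    (OutS c w).card ≤ 1 := by
  rw [← hl]
  calc (OutS c (l.map (sgen n)).prod).card ≤ l.count c := card_outS_le_count c l
    _ ≤ 1 := List.nodup_iff_count_le_one.mp hnd c

lemma not_stabC_of_mem_nodup {l : List (Fin (n - 1))} {w : Equiv.Perm (Fin n)}
    (hnd : l.Nodup) (hl : (l.map (sgen n)).prod = w) {c : Fin (n - 1)} (hc : c ∈ l) :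
    ¬ StabC c w := by
  obtain ⟨s, t, rfl⟩ := List.append_of_mem hc
  have hnd' := hnd
  rw [List.nodup_append] at hnd'
  obtain ⟨hs, hct, hdisj⟩ := hnd'
  have hcs : c ∉ s := fun hmem => by
    have := hdisj _ hmem c (by simp)
    simp at this
  have hct2 : c ∉ t := by
    rcases List.nodup_cons.mp hct with ⟨h1, _⟩
    exact h1
  have hu : StabC c (s.map (sgen n)).prod := stabC_prod fun x hx => fun hxc => hcs (hxc ▸ hx)
  have hv : StabC c (t.map (sgen n)).prod := stabC_prod fun x hx => fun hxc => hct2 (hxc ▸ hx)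
  intro hw
  rw [← hl] at hw
  simp only [List.map_append, List.prod_append, List.map_cons, List.prod_cons] at hw
  set u := (s.map (sgen n)).prod
  set v := (t.map (sgen n)).prod
  have hsg : sgen n c = u⁻¹ * (u * (sgen n c * v)) * v⁻¹ := by group
  have hstab : StabC c (sgen n c) := by
    rw [hsg]
    exact stabC_mul (stabC_mul (stabC_inv hu) hw) (stabC_inv hv)
  have := hstab (cpos c) (le_refl _)
  rw [sgen_cpos] at this
  simp only [spos] at this
  omega

lemma nset_subset_toFinset {l : List (Fin (n - 1))} {w : Equiv.Perm (Fin n)}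
    (hl : (l.map (sgen n)).prod = w) : NSet w ⊆ l.toFinset := by
  intro c hc
  simp only [NSet, Finset.mem_filter, mem_univ, true_and] at hc
  rw [List.mem_toFinset]
  by_contra hcl
  have : StabC c w := hl ▸ stabC_prod fun x hx => fun hxc => hcl (hxc ▸ hx)
  rw [← outS_empty_iff] at this
  rw [this] at hc
  simp at hc

lemma toFinset_subset_nset {l : List (Fin (n - 1))} {w : Equiv.Perm (Fin n)}
    (hnd : l.Nodup) (hl : (l.map (sgen n)).prod = w) : l.toFinset ⊆ NSet w := by
  intro c hc
  rw [List.mem_toFinset] at hc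
  simp only [NSet, Finset.mem_filter, mem_univ, true_and]
  rw [Finset.nonempty_iff_ne_empty]
  intro hemp
  exact not_stabC_of_mem_nodup hnd hl hc (outS_empty_iff.mp hemp)

lemma sgen_compare {i : Fin (n - 1)} {u v : Fin n} (huv : u.1 < v.1)
    (hs : (sgen n i v).1 < (sgen n i u).1) : u = cpos i ∧ v = spos i := by
  have hcv : (cpos i : Fin n).1 = i.1 := rfl
  have hsv : (spos i : Fin n).1 = i.1 + 1 := rfl
  rcases eq_or_ne u.1 i.1 with hu1 | hu1
  · have hu : u = cpos i := Fin.ext hu1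
    rcases eq_or_ne v.1 (i.1 + 1) with hv2 | hv2
    · exact ⟨hu, Fin.ext hv2⟩
    · have hv1 : v.1 ≠ i.1 := by omega
      rw [hu, sgen_cpos, sgen_apply_of_ne i v hv1 hv2, hsv] at hs
      exfalso; omega
  · rcases eq_or_ne u.1 (i.1 + 1) with hu2 | hu2
    · have hu : u = spos i := Fin.ext hu2
      have hv1 : v.1 ≠ i.1 := by omega
      have hv2 : v.1 ≠ i.1 + 1 := by omega
      rw [hu, sgen_spos, sgen_apply_of_ne i v hv1 hv2, hcv] at hs
      exfalso; omega
    · rw [sgen_apply_of_ne i u hu1 hu2] at hs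
      rcases eq_or_ne v.1 i.1 with hv1 | hv1
      · have hv : v = cpos i := Fin.ext hv1
        rw [hv, sgen_cpos, hsv] at hs
        exfalso; omega
      · rcases eq_or_ne v.1 (i.1 + 1) with hv2 | hv2
        · have hv : v = spos i := Fin.ext hv2
          rw [hv, sgen_spos, hcv] at hs
          exfalso; omega
        · rw [sgen_apply_of_ne i v hv1 hv2] at hs
          exfalso; omega

lemma invNum_one : invNum (1 : Equiv.Perm (Fin n)) = 0 := by
  rw [invNum, Finset.card_eq_zero, Finset.filter_eq_empty_iff]
  rintro p -
  simp only [Equiv.Perm.one_apply]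
  rintro ⟨h1, h2⟩
  exact absurd h2 (asymm h1)

lemma invNum_mul_sgen_le (i : Fin (n - 1)) (w : Equiv.Perm (Fin n)) :
    invNum (sgen n i * w) ≤ invNum w + 1 := by
  rw [invNum, invNum]
  have hsub : (univ.filter fun p : Fin n × Fin n =>
        p.1 < p.2 ∧ (sgen n i * w) p.2 < (sgen n i * w) p.1)
      ⊆ insert (w⁻¹ (cpos i), w⁻¹ (spos i))
        (univ.filter fun p : Fin n × Fin n => p.1 < p.2 ∧ w p.2 < w p.1) := by
    rw [Finset.subset_iff]
    intro p hp
    obtain ⟨x, y⟩ := p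
    rw [Finset.mem_filter] at hp
    simp only [Finset.mem_filter, mem_univ, true_and, Equiv.Perm.mul_apply] at hp
    obtain ⟨hxy, hs⟩ := hp
    rcases lt_trichotomy (w y) (w x) with h | h | h
    · refine Finset.mem_insert_of_mem ?_
      simp only [Finset.mem_filter, mem_univ, true_and]
      exact ⟨hxy, h⟩
    · exact absurd (w.injective h) (ne_of_lt hxy).symm
    · obtain ⟨h1, h2⟩ := sgen_compare (Fin.lt_def.mp h) (Fin.lt_def.mp hs)
      have hx : x = w⁻¹ (cpos i) := by rw [← h1]; simp
      have hy : y = w⁻¹ (spos i) := by rw [← h2]; simp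
      rw [hx, hy]
      exact Finset.mem_insert_self _ _
  calc (univ.filter fun p : Fin n × Fin n =>
        p.1 < p.2 ∧ (sgen n i * w) p.2 < (sgen n i * w) p.1).card
      ≤ (insert (w⁻¹ (cpos i), w⁻¹ (spos i))
        (univ.filter fun p : Fin n × Fin n => p.1 < p.2 ∧ w p.2 < w p.1)).card :=
      Finset.card_le_card hsub
    _ ≤ _ := Finset.card_insert_le _ _

lemma invNum_mul_sgen_lt {i : Fin (n - 1)} {w : Equiv.Perm (Fin n)}
    (hdesc : (w⁻¹ (spos i)).1 < (w⁻¹ (cpos i)).1) :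
    invNum (sgen n i * w) < invNum w := by
  rw [invNum, invNum]
  set S := univ.filter fun p : Fin n × Fin n => p.1 < p.2 ∧ w p.2 < w p.1 with hS
  set pstar : Fin n × Fin n := (w⁻¹ (spos i), w⁻¹ (cpos i)) with hpstar
  have hmem : pstar ∈ S := by
    simp only [hS, hpstar, Finset.mem_filter, mem_univ, true_and]
    refine ⟨Fin.lt_def.mpr hdesc, ?_⟩
    simp only [Equiv.Perm.inv_def, Equiv.apply_symm_apply]
    exact Fin.lt_def.mpr (by simp [cpos, spos])
  have hsub : (univ.filter fun p : Fin n × Fin n =>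
        p.1 < p.2 ∧ (sgen n i * w) p.2 < (sgen n i * w) p.1) ⊆ S.erase pstar := by
    rw [Finset.subset_iff]
    intro p hp
    obtain ⟨x, y⟩ := p
    rw [Finset.mem_filter] at hp
    simp only [Finset.mem_filter, mem_univ, true_and, Equiv.Perm.mul_apply] at hp
    obtain ⟨hxy, hs⟩ := hp
    rw [Finset.mem_erase]
    rcases lt_trichotomy (w y) (w x) with h | h | h
    · refine ⟨?_, by simp only [hS, Finset.mem_filter, mem_univ, true_and]; exact ⟨hxy, h⟩⟩
      intro heq
      rw [hpstar, Prod.ext_iff] at heq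
      obtain ⟨hx, hy⟩ := heq
      simp only at hx hy
      rw [hx, hy, Equiv.Perm.inv_def, Equiv.apply_symm_apply, Equiv.apply_symm_apply, sgen_cpos,
        sgen_spos] at hs
      have := Fin.lt_def.mp hs
      simp only [cpos, spos] at this
      omega
    · exact absurd (w.injective h) (ne_of_lt hxy).symm
    · exfalso
      obtain ⟨h1, h2⟩ := sgen_compare (Fin.lt_def.mp h) (Fin.lt_def.mp hs)
      have hx : x = w⁻¹ (cpos i) := by rw [← h1]; simp
      have hy : y = w⁻¹ (spos i) := by rw [← h2]; simp
      rw [hx, hy] at hxy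
      have := Fin.lt_def.mp hxy
      omega
  calc (univ.filter fun p : Fin n × Fin n =>
        p.1 < p.2 ∧ (sgen n i * w) p.2 < (sgen n i * w) p.1).card
      ≤ (S.erase pstar).card := Finset.card_le_card hsub
    _ < S.card := Finset.card_erase_lt_of_mem hmem

lemma eq_one_of_no_descent {w : Equiv.Perm (Fin n)}
    (h : ∀ i : Fin (n - 1), (w⁻¹ (cpos i)).1 ≤ (w⁻¹ (spos i)).1) : w = 1 := by
  have hstep : ∀ a b : Fin n, b.1 = a.1 + 1 → (w⁻¹ a).1 < (w⁻¹ b).1 := by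
    intro a b hb
    have hi : a.1 < n - 1 := by have := b.2; omega
    have h1 := h ⟨a.1, hi⟩
    have ha : cpos ⟨a.1, hi⟩ = a := Fin.ext rfl
    have hbb : spos ⟨a.1, hi⟩ = b := Fin.ext hb.symm
    rw [ha, hbb] at h1
    rcases h1.lt_or_eq with hlt | heq
    · exact hlt
    · exfalso
      have h2 : w⁻¹ a = w⁻¹ b := Fin.ext heq
      have := w⁻¹.injective h2
      rw [this] at hb
      omega
  have hmono : ∀ m : ℕ, ∀ a b : Fin n, b.1 = a.1 + m + 1 → (w⁻¹ a).1 < (w⁻¹ b).1 := by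
    intro m
    induction m with
    | zero => intro a b hb; exact hstep a b (by omega)
    | succ m ih =>
        intro a b hb
        have hmid : a.1 + m + 1 < n := by have := b.2; omega
        calc (w⁻¹ a).1 < (w⁻¹ (⟨a.1 + m + 1, hmid⟩ : Fin n)).1 := ih a _ rfl
          _ < (w⁻¹ b).1 := hstep ⟨a.1 + m + 1, hmid⟩ b hb
  have hle : ∀ k : ℕ, ∀ a : Fin n, a.1 = k → k ≤ (w⁻¹ a).1 := by
    intro k
    induction k with
    | zero => intro a _; omega
    | succ k ih =>
        intro a ha
        have hk : k < n := by have := a.2; omega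
        have h1 : k ≤ (w⁻¹ (⟨k, hk⟩ : Fin n)).1 := ih _ rfl
        have h2 : (w⁻¹ (⟨k, hk⟩ : Fin n)).1 < (w⁻¹ a).1 := hstep ⟨k, hk⟩ a ha
        omega
  have hsum : (∑ a : Fin n, (w⁻¹ a).1) = ∑ a : Fin n, a.1 :=
    Equiv.sum_comp (w⁻¹ : Equiv.Perm (Fin n)) Fin.val
  have hpt := (Finset.sum_eq_sum_iff_of_le (s := (univ : Finset (Fin n)))
      (f := fun a : Fin n => a.1) (g := fun a : Fin n => (w⁻¹ a).1)
      (fun a _ => hle a.1 a rfl)).mp hsum.symm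
  have hinv : w⁻¹ = 1 :=
    Equiv.ext fun a => (Fin.ext (hpt a (mem_univ a)).symm : w⁻¹ a = a)
  calc w = (w⁻¹)⁻¹ := (inv_inv w).symm
    _ = (1 : Equiv.Perm (Fin n))⁻¹ := by rw [hinv]
    _ = 1 := inv_one

lemma exists_word_aux : ∀ k : ℕ, ∀ w : Equiv.Perm (Fin n), invNum w ≤ k →
    ∃ l : List (Fin (n - 1)), (l.map (sgen n)).prod = w ∧ l.length ≤ invNum w := by
  intro k
  induction k with
  | zero =>
      intro w hw
      by_cases hdesc : ∃ i : Fin (n - 1), (w⁻¹ (spos i)).1 < (w⁻¹ (cpos i)).1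
      · obtain ⟨i, hi⟩ := hdesc
        exact absurd (invNum_mul_sgen_lt hi) (by omega)
      · push_neg at hdesc
        refine ⟨[], ?_, by simp⟩
        simp only [List.map_nil, List.prod_nil]
        exact (eq_one_of_no_descent hdesc).symm
  | succ k ih =>
      intro w hw
      by_cases hdesc : ∃ i : Fin (n - 1), (w⁻¹ (spos i)).1 < (w⁻¹ (cpos i)).1
      · obtain ⟨i, hi⟩ := hdesc
        have hlt := invNum_mul_sgen_lt hi
        obtain ⟨l', hl', hlen⟩ := ih (sgen n i * w) (by omega)
        refine ⟨i :: l', ?_, ?_⟩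
        · simp only [List.map_cons, List.prod_cons, hl']
          rw [← mul_assoc, sgen_mul_self, one_mul]
        · simp only [List.length_cons]
          omega
      · push_neg at hdesc
        refine ⟨[], ?_, by simp⟩
        simp only [List.map_nil, List.prod_nil]
        exact (eq_one_of_no_descent hdesc).symm

lemma invNum_le_length (l : List (Fin (n - 1))) :
    invNum (l.map (sgen n)).prod ≤ l.length := by
  induction l with
  | nil => simp [invNum_one]
  | cons a l ih =>
      simp only [List.map_cons, List.prod_cons, List.length_cons]
      calc invNum (sgen n a * (l.map (sgen n)).prod)
          ≤ invNum (l.map (sgen n)).prod + 1 := invNum_mul_sgen_le a _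
        _ ≤ l.length + 1 := by omega

section Avoid

lemma lt_apply_of_inversion {w : Equiv.Perm (Fin n)} (hav : ¬ Contains321 w)
    {a b : Fin n} (hab : a.1 < b.1) (hw : (w b).1 < (w a).1) : a.1 < (w a).1 := by
  by_contra hc
  push_neg at hc
  by_cases hex : ∃ c : Fin n, c.1 < a.1 ∧ (w a).1 < (w c).1
  · obtain ⟨c, h1, h2⟩ := hex
    exact hav ⟨c, a, b, Fin.lt_def.mpr h1, Fin.lt_def.mpr hab, Fin.lt_def.mpr hw,
      Fin.lt_def.mpr h2⟩
  · push_neg at hex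
    have hsub : (Finset.Iic a).image w ⊆ Finset.Iic (w a) := by
      intro y hy
      simp only [Finset.mem_image, Finset.mem_Iic] at hy ⊢
      obtain ⟨x, hx, rfl⟩ := hy
      rcases eq_or_lt_of_le hx with rfl | hlt
      · exact le_refl _
      · exact Fin.le_def.mpr (hex x (Fin.lt_def.mp hlt))
    have h1 : ((Finset.Iic a).image w).card = a.1 + 1 := by
      rw [Finset.card_image_of_injective _ w.injective, Fin.card_Iic]
    have h2 := Finset.card_le_card hsub
    rw [h1, Fin.card_Iic] at h2
    have himg : (Finset.Iic a).image w = Finset.Iic (w a) :=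
      Finset.eq_of_subset_of_card_le hsub (by rw [h1, Fin.card_Iic]; omega)
    have hwb : w b ∈ Finset.Iic (w a) := Finset.mem_Iic.mpr (le_of_lt (Fin.lt_def.mpr hw))
    rw [← himg] at hwb
    simp only [Finset.mem_image, Finset.mem_Iic] at hwb
    obtain ⟨x, hx, hxb⟩ := hwb
    have hxbe : x = b := w.injective hxb
    rw [hxbe] at hx
    have := Fin.le_def.mp hx
    omega

lemma apply_lt_of_inversion {w : Equiv.Perm (Fin n)} (hav : ¬ Contains321 w)
    {a b : Fin n} (hab : a.1 < b.1) (hw : (w b).1 < (w a).1) : (w b).1 < b.1 := by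
  by_contra hc
  push_neg at hc
  by_cases hex : ∃ c : Fin n, b.1 < c.1 ∧ (w c).1 < (w b).1
  · obtain ⟨c, h1, h2⟩ := hex
    exact hav ⟨a, b, c, Fin.lt_def.mpr hab, Fin.lt_def.mpr h1, Fin.lt_def.mpr h2,
      Fin.lt_def.mpr hw⟩
  · push_neg at hex
    have hsub : (Finset.Ici b).image w ⊆ Finset.Ici (w b) := by
      intro y hy
      simp only [Finset.mem_image, Finset.mem_Ici] at hy ⊢
      obtain ⟨x, hx, rfl⟩ := hy
      rcases eq_or_lt_of_le hx with rfl | hlt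
      · exact le_refl _
      · exact Fin.le_def.mpr (hex x (Fin.lt_def.mp hlt))
    have h1 : ((Finset.Ici b).image w).card = n - b.1 := by
      rw [Finset.card_image_of_injective _ w.injective, Fin.card_Ici]
    have h2 := Finset.card_le_card hsub
    rw [h1, Fin.card_Ici] at h2
    have hbn : b.1 < n := b.2
    have hwbn : (w b).1 < n := (w b).2
    have himg : (Finset.Ici b).image w = Finset.Ici (w b) :=
      Finset.eq_of_subset_of_card_le hsub (by rw [h1, Fin.card_Ici]; omega)
    have hwa : w a ∈ Finset.Ici (w b) := Finset.mem_Ici.mpr (le_of_lt (Fin.lt_def.mpr hw))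
    rw [← himg] at hwa
    simp only [Finset.mem_image, Finset.mem_Ici] at hwa
    obtain ⟨x, hx, hxa⟩ := hwa
    have hxae : x = a := w.injective hxa
    rw [hxae] at hx
    have := Fin.le_def.mp hx
    omega

lemma pattern_of_two_out {w : Equiv.Perm (Fin n)} {c : Fin (n - 1)} {a1 a2 b1 b2 : Fin n}
    (ha1 : a1 ∈ OutS c w) (ha2 : a2 ∈ OutS c w) (h12 : a1.1 < a2.1)
    (hb1 : b1 ∈ InS c w) (hb2 : b2 ∈ InS c w) (hb12 : b1.1 < b2.1) :
    Contains321 w ∨ Contains3412 w := by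
  rw [mem_outS] at ha1 ha2
  rw [mem_inS] at hb1 hb2
  rcases lt_trichotomy ((w a2).1) ((w a1).1) with h | h | h
  · exact Or.inl ⟨a1, a2, b1, Fin.lt_def.mpr h12, Fin.lt_def.mpr (by omega),
      Fin.lt_def.mpr (by omega), Fin.lt_def.mpr h⟩
  · have := w.injective (Fin.ext h)
    exfalso
    rw [this] at h12
    omega
  · rcases lt_trichotomy ((w b2).1) ((w b1).1) with h' | h' | h'
    · exact Or.inl ⟨a2, b1, b2, Fin.lt_def.mpr (by omega), Fin.lt_def.mpr hb12,
        Fin.lt_def.mpr h', Fin.lt_def.mpr (by omega)⟩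
    · have := w.injective (Fin.ext h')
      exfalso
      rw [this] at hb12
      omega
    · exact Or.inr ⟨a1, a2, b1, b2, Fin.lt_def.mpr h12, Fin.lt_def.mpr (by omega),
        Fin.lt_def.mpr hb12, Fin.lt_def.mpr h', Fin.lt_def.mpr (by omega),
        Fin.lt_def.mpr h⟩

lemma card_outS_le_one_of_avoid {w : Equiv.Perm (Fin n)} (h321 : ¬ Contains321 w)
    (h3412 : ¬ Contains3412 w) (c : Fin (n - 1)) : (OutS c w).card ≤ 1 := by
  by_contra hc
  push_neg at hc
  obtain ⟨a1, ha1, a2, ha2, hane⟩ := Finset.one_lt_card.mp hc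
  have hcin : 1 < (InS c w).card := by rw [← card_out_eq_card_in]; exact hc
  obtain ⟨b1, hb1, b2, hb2, hbne⟩ := Finset.one_lt_card.mp hcin
  have hane' : a1.1 ≠ a2.1 := fun h => hane (Fin.ext h)
  have hbne' : b1.1 ≠ b2.1 := fun h => hbne (Fin.ext h)
  have hpat : Contains321 w ∨ Contains3412 w := by
    rcases lt_or_gt_of_ne hane' with ha | ha
    · rcases lt_or_gt_of_ne hbne' with hb | hb
      · exact pattern_of_two_out ha1 ha2 ha hb1 hb2 hb
      · exact pattern_of_two_out ha1 ha2 ha hb2 hb1 hb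
    · rcases lt_or_gt_of_ne hbne' with hb | hb
      · exact pattern_of_two_out ha2 ha1 ha hb1 hb2 hb
      · exact pattern_of_two_out ha2 ha1 ha hb2 hb1 hb
  rcases hpat with h | h
  · exact h321 h
  · exact h3412 h

lemma invNum_le_card_nset {w : Equiv.Perm (Fin n)} (h321 : ¬ Contains321 w)
    (h3412 : ¬ Contains3412 w) : invNum w ≤ (NSet w).card := by
  by_cases hn : invNum w = 0
  · omega
  have hne : (univ.filter fun p : Fin n × Fin n => p.1 < p.2 ∧ w p.2 < w p.1).Nonempty := by
    rw [← Finset.card_pos]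
    rw [invNum] at hn
    omega
  have hn2 : 2 ≤ n := by
    obtain ⟨p, hp⟩ := hne
    simp only [Finset.mem_filter, mem_univ, true_and] at hp
    have h1 := Fin.lt_def.mp hp.1
    have := p.2.2
    omega
  rw [invNum]
  apply Finset.card_le_card_of_injOn
    (fun p : Fin n × Fin n => (⟨min (max p.1.1 (w p.2).1) (n - 2), by omega⟩ : Fin (n - 1)))
  · rintro ⟨a, b⟩ hp
    simp only [Finset.mem_coe, Finset.mem_filter, mem_univ, true_and] at hp
    have hab := Fin.lt_def.mp hp.1
    have hw := Fin.lt_def.mp hp.2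
    have hG1 : a.1 < (w a).1 := lt_apply_of_inversion h321 hab hw
    have hwa : (w a).1 ≤ n - 1 := by have := (w a).2; omega
    simp only [Finset.mem_coe, NSet, Finset.mem_filter, mem_univ, true_and]
    refine ⟨a, mem_outS.mpr ⟨?_, ?_⟩⟩
    · show a.1 ≤ min (max a.1 (w b).1) (n - 2)
      omega
    · show min (max a.1 (w b).1) (n - 2) < (w a).1
      omega
  · rintro ⟨a, b⟩ hp ⟨a', b'⟩ hp' heq
    simp only [Finset.coe_filter, Set.mem_setOf_eq, mem_univ, true_and] at hp hp'
    have hab := Fin.lt_def.mp hp.1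
    have hw := Fin.lt_def.mp hp.2
    have hab' := Fin.lt_def.mp hp'.1
    have hw' := Fin.lt_def.mp hp'.2
    have hval := congrArg Fin.val heq
    simp only at hval
    set cv : ℕ := min (max a.1 (w b).1) (n - 2) with hcv
    have hcvlt : cv < n - 1 := by omega
    set c : Fin (n - 1) := ⟨cv, hcvlt⟩ with hc
    have hG1 : a.1 < (w a).1 := lt_apply_of_inversion h321 hab hw
    have hG2 : (w b).1 < b.1 := apply_lt_of_inversion h321 hab hw
    have hG1' : a'.1 < (w a').1 := lt_apply_of_inversion h321 hab' hw'
    have hG2' : (w b').1 < b'.1 := apply_lt_of_inversion h321 hab' hw'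
    have hwa : (w a).1 ≤ n - 1 := by have := (w a).2; omega
    have hwa' : (w a').1 ≤ n - 1 := by have := (w a').2; omega
    have hb : b.1 ≤ n - 1 := by have := b.2; omega
    have hb' : b'.1 ≤ n - 1 := by have := b'.2; omega
    have hma : a ∈ OutS c w := mem_outS.mpr ⟨by show a.1 ≤ cv; omega, by show cv < (w a).1; omega⟩
    have hma' : a' ∈ OutS c w := by
      refine mem_outS.mpr ⟨?_, ?_⟩
      · show a'.1 ≤ cv
        omega
      · show cv < (w a').1
        omega
    have hmb : b ∈ InS c w := mem_inS.mpr ⟨by show cv < b.1; omega, by show (w b).1 ≤ cv; omega⟩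
    have hmb' : b' ∈ InS c w := by
      refine mem_inS.mpr ⟨?_, ?_⟩
      · show cv < b'.1
        omega
      · show (w b').1 ≤ cv
        omega
    have houtc := card_outS_le_one_of_avoid h321 h3412 c
    have hinc : (InS c w).card ≤ 1 := by rw [← card_out_eq_card_in]; exact houtc
    have haa : a = a' := by
      by_contra hne
      exact absurd houtc (by
        have := Finset.one_lt_card.mpr ⟨a, hma, a', hma', hne⟩
        omega)
    have hbb : b = b' := by
      by_contra hne
      exact absurd hinc (by
        have := Finset.one_lt_card.mpr ⟨b, hmb, b', hmb', hne⟩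
        omega)
    exact Prod.ext haa hbb

end Avoid

section TwoLetters

lemma fixes_of_stab_pair {c1 c2 : Fin (n - 1)} (h12 : c2.1 = c1.1 + 1)
    {p : Equiv.Perm (Fin n)} (h1 : StabC c1 p) (h2 : StabC c2 p) :
    p (spos c1) = spos c1 := by
  have hle : (p (spos c1)).1 ≤ c2.1 := h2 _ (by show c1.1 + 1 ≤ c2.1; omega)
  have hgt : c1.1 < (p (spos c1)).1 := stabC_val_lt h1 (by show c1.1 < c1.1 + 1; omega)
  exact Fin.ext (by show (p (spos c1)).1 = c1.1 + 1; omega)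

lemma key_calc1 {u v t : Equiv.Perm (Fin n)} {c1 c2 : Fin (n - 1)} (h12 : c2.1 = c1.1 + 1)
    (hu1 : StabC c1 u) (hu2 : StabC c2 u) (hv1 : StabC c1 v) (hv2 : StabC c2 v)
    (ht1 : StabC c1 t) (ht2 : StabC c2 t) :
    (u * (sgen n c1 * (v * (sgen n c2 * t)))) (spos c1) ≠ spos c1 := by
  have hts : t (spos c1) = spos c1 := fixes_of_stab_pair h12 ht1 ht2
  have hsp : (spos c1 : Fin n) = cpos c2 := Fin.ext (by show c1.1 + 1 = c2.1; omega)
  intro heq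
  simp only [Equiv.Perm.mul_apply] at heq
  rw [hts, hsp, sgen_cpos] at heq
  have hv' : c2.1 < (v (spos c2)).1 := stabC_val_lt hv2 (by show c2.1 < c2.1 + 1; omega)
  have hs : sgen n c1 (v (spos c2)) = v (spos c2) :=
    sgen_apply_of_ne c1 _ (by omega) (by omega)
  rw [hs] at heq
  have hu' : c2.1 < (u (v (spos c2))).1 := stabC_val_lt hu2 hv'
  have hval := congrArg Fin.val heq
  have he1 : (spos c1 : Fin n).1 = c1.1 + 1 := rfl
  omega

lemma key_calc2 {u v t : Equiv.Perm (Fin n)} {c1 c2 : Fin (n - 1)} (h12 : c2.1 = c1.1 + 1)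
    (hu1 : StabC c1 u) (hu2 : StabC c2 u) (hv1 : StabC c1 v) (hv2 : StabC c2 v)
    (ht1 : StabC c1 t) (ht2 : StabC c2 t) :
    (u * (sgen n c2 * (v * (sgen n c1 * t)))) (spos c1) ≠ spos c1 := by
  have hts : t (spos c1) = spos c1 := fixes_of_stab_pair h12 ht1 ht2
  intro heq
  simp only [Equiv.Perm.mul_apply] at heq
  rw [hts, sgen_spos] at heq
  have hv' : (v (cpos c1)).1 ≤ c1.1 := hv1 _ (le_refl _)
  have hs : sgen n c2 (v (cpos c1)) = v (cpos c1) :=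
    sgen_apply_of_ne c2 _ (by omega) (by omega)
  rw [hs] at heq
  have hu' : (u (v (cpos c1))).1 ≤ c1.1 := hu1 _ hv'
  have hval := congrArg Fin.val heq
  have he1 : (spos c1 : Fin n).1 = c1.1 + 1 := rfl
  omega

lemma split_two {α : Type*} [DecidableEq α] {l : List α} {x y : α} (hnd : l.Nodup)
    (hx : x ∈ l) (hy : y ∈ l) (hxy : x ≠ y) :
    ∃ A B C : List α, (l = A ++ x :: (B ++ y :: C) ∨ l = A ++ y :: (B ++ x :: C)) ∧
      x ∉ A ∧ x ∉ B ∧ x ∉ C ∧ y ∉ A ∧ y ∉ B ∧ y ∉ C := by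
  obtain ⟨s, t, rfl⟩ := List.append_of_mem hx
  have hnd' := hnd
  rw [List.nodup_append] at hnd'
  obtain ⟨hs, hxt, hdisj⟩ := hnd'
  have hxs : x ∉ s := fun hmem => by
    have := hdisj _ hmem x (by simp)
    simp at this
  have hxt2 : x ∉ t := (List.nodup_cons.mp hxt).1
  have hyne : y ∈ s ∨ y ∈ t := by
    rcases List.mem_append.mp hy with h | h
    · exact Or.inl h
    · rcases List.mem_cons.mp h with h | h
      · exact absurd h hxy.symm
      · exact Or.inr h
  rcases hyne with hyin | hyin
  · -- y occurs before x
    obtain ⟨A, D, rfl⟩ := List.append_of_mem hyin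
    have hsnd := hs
    rw [List.nodup_append] at hsnd
    obtain ⟨hA, hyD, hdisj2⟩ := hsnd
    refine ⟨A, D, t, Or.inr (by simp), ?_, ?_, hxt2, ?_, ?_, ?_⟩
    · intro h; exact hxs (by simp [h])
    · intro h; exact hxs (by simp [h])
    · intro h
      have := hdisj2 _ h y (by simp)
      simp at this
    · exact (List.nodup_cons.mp hyD).1
    · intro h
      exact hdisj y (by simp) y (by simp [h]) rfl
  · -- y occurs after x
    obtain ⟨B, C, rfl⟩ := List.append_of_mem hyin
    have htnd := (List.nodup_cons.mp hxt).2
    rw [List.nodup_append] at htnd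
    obtain ⟨hB, hyC, hdisj2⟩ := htnd
    refine ⟨s, B, C, Or.inl rfl, hxs, ?_, ?_, ?_, ?_, ?_⟩
    · intro h; exact hxt2 (by simp [h])
    · intro h; exact hxt2 (by simp [h])
    · intro h
      have := hdisj _ h y (by simp)
      simp at this
    · intro h
      have := hdisj2 _ h y (by simp)
      simp at this
    · exact (List.nodup_cons.mp hyC).1

lemma apply_ne_of_two_letters {l : List (Fin (n - 1))} {w : Equiv.Perm (Fin n)}
    (hnd : l.Nodup) (hl : (l.map (sgen n)).prod = w) {c1 c2 : Fin (n - 1)}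
    (h12 : c2.1 = c1.1 + 1) (hc1 : c1 ∈ l) (hc2 : c2 ∈ l) :
    w (spos c1) ≠ spos c1 := by
  have hne : c1 ≠ c2 := fun h => by rw [h] at h12; omega
  obtain ⟨A, B, C, hcase, h1A, h1B, h1C, h2A, h2B, h2C⟩ := split_two hnd hc1 hc2 hne
  have hA1 : StabC c1 (A.map (sgen n)).prod := stabC_prod fun x hx h => h1A (h ▸ hx)
  have hA2 : StabC c2 (A.map (sgen n)).prod := stabC_prod fun x hx h => h2A (h ▸ hx)
  have hB1 : StabC c1 (B.map (sgen n)).prod := stabC_prod fun x hx h => h1B (h ▸ hx)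
  have hB2 : StabC c2 (B.map (sgen n)).prod := stabC_prod fun x hx h => h2B (h ▸ hx)
  have hC1 : StabC c1 (C.map (sgen n)).prod := stabC_prod fun x hx h => h1C (h ▸ hx)
  have hC2 : StabC c2 (C.map (sgen n)).prod := stabC_prod fun x hx h => h2C (h ▸ hx)
  rcases hcase with h | h
  · have hw : w = (A.map (sgen n)).prod * (sgen n c1 * ((B.map (sgen n)).prod *
        (sgen n c2 * (C.map (sgen n)).prod))) := by
      rw [← hl, h]
      simp [List.map_append, List.prod_append, mul_assoc]
    rw [hw]
    exact key_calc1 h12 hA1 hA2 hB1 hB2 hC1 hC2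
  · have hw : w = (A.map (sgen n)).prod * (sgen n c2 * ((B.map (sgen n)).prod *
        (sgen n c1 * (C.map (sgen n)).prod))) := by
      rw [← hl, h]
      simp [List.map_append, List.prod_append, mul_assoc]
    rw [hw]
    exact key_calc2 h12 hA1 hA2 hB1 hB2 hC1 hC2

end TwoLetters

section Final

lemma two_out_contra {l : List (Fin (n - 1))} {w : Equiv.Perm (Fin n)} (hnd : l.Nodup)
    (hl : (l.map (sgen n)).prod = w) {c : Fin (n - 1)} {a1 a2 : Fin n}
    (h1 : a1 ∈ OutS c w) (h2 : a2 ∈ OutS c w) (hne : a1.1 ≠ a2.1) : False := by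
  have := Finset.one_lt_card.mpr ⟨a1, h1, a2, h2, fun h => hne (congrArg Fin.val h)⟩
  have := card_outS_le_one_of_nodup hnd hl c
  omega

lemma two_in_contra {l : List (Fin (n - 1))} {w : Equiv.Perm (Fin n)} (hnd : l.Nodup)
    (hl : (l.map (sgen n)).prod = w) {c : Fin (n - 1)} {b1 b2 : Fin n}
    (h1 : b1 ∈ InS c w) (h2 : b2 ∈ InS c w) (hne : b1.1 ≠ b2.1) : False := by
  have hlt := Finset.one_lt_card.mpr ⟨b1, h1, b2, h2, fun h => hne (congrArg Fin.val h)⟩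
  have hle := card_outS_le_one_of_nodup hnd hl c
  rw [card_out_eq_card_in] at hle
  omega

lemma avoid321_of_nodup {l : List (Fin (n - 1))} {w : Equiv.Perm (Fin n)} (hnd : l.Nodup)
    (hl : (l.map (sgen n)).prod = w) : ¬ Contains321 w := by
  rintro ⟨i, j, k, hij, hjk, h1, h2⟩
  have hij' := Fin.lt_def.mp hij
  have hjk' := Fin.lt_def.mp hjk
  have h1' := Fin.lt_def.mp h1
  have h2' := Fin.lt_def.mp h2
  have hwi := (w i).2
  have hwk := (w k).2
  have hk := k.2
  rcases lt_trichotomy j.1 ((w j).1) with h | h | h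
  · -- w j > j : positions i, j are both in OutS at cut j
    have hjn : j.1 < n - 1 := by omega
    exact two_out_contra hnd hl (c := ⟨j.1, hjn⟩)
      (mem_outS.mpr ⟨by show i.1 ≤ j.1; omega, by show j.1 < (w i).1; omega⟩)
      (mem_outS.mpr ⟨le_refl _, h⟩) (by omega)
  · -- w j = j : letters j-1 and j both occur
    have hj1 : 1 ≤ j.1 := by omega
    have hjn : j.1 < n - 1 := by omega
    set c2 : Fin (n - 1) := ⟨j.1, hjn⟩ with hc2
    set c1 : Fin (n - 1) := ⟨j.1 - 1, by omega⟩ with hc1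
    have h12 : c2.1 = c1.1 + 1 := by show j.1 = (j.1 - 1) + 1; omega
    have hm1 : c1 ∈ l := by
      have : c1 ∈ NSet w := by
        simp only [NSet, Finset.mem_filter, mem_univ, true_and]
        exact ⟨i, mem_outS.mpr ⟨by show i.1 ≤ j.1 - 1; omega, by show j.1 - 1 < (w i).1; omega⟩⟩
      exact List.mem_toFinset.mp (nset_subset_toFinset hl this)
    have hm2 : c2 ∈ l := by
      have : c2 ∈ NSet w := by
        simp only [NSet, Finset.mem_filter, mem_univ, true_and]
        exact ⟨i, mem_outS.mpr ⟨by show i.1 ≤ j.1; omega, by show j.1 < (w i).1; omega⟩⟩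
      exact List.mem_toFinset.mp (nset_subset_toFinset hl this)
    have hne := apply_ne_of_two_letters hnd hl h12 hm1 hm2
    have hspj : (spos c1 : Fin n) = j := Fin.ext (by show (j.1 - 1) + 1 = j.1; omega)
    rw [hspj] at hne
    exact hne (Fin.ext (by omega))
  · -- w j < j : positions j, k are both in InS at cut j-1
    have hj1 : 1 ≤ j.1 := by omega
    have hjn : j.1 - 1 < n - 1 := by have := j.2; omega
    exact two_in_contra hnd hl (c := ⟨j.1 - 1, hjn⟩)
      (mem_inS.mpr ⟨by show j.1 - 1 < j.1; omega, by show (w j).1 ≤ j.1 - 1; omega⟩)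
      (mem_inS.mpr ⟨by show j.1 - 1 < k.1; omega, by show (w k).1 ≤ j.1 - 1; omega⟩)
      (by omega)

lemma avoid3412_of_nodup {l : List (Fin (n - 1))} {w : Equiv.Perm (Fin n)} (hnd : l.Nodup)
    (hl : (l.map (sgen n)).prod = w) : ¬ Contains3412 w := by
  rintro ⟨i, j, k, m, hij, hjk, hkm, h1, h2, h3⟩
  have hij' := Fin.lt_def.mp hij
  have hjk' := Fin.lt_def.mp hjk
  have hkm' := Fin.lt_def.mp hkm
  have h1' := Fin.lt_def.mp h1
  have h2' := Fin.lt_def.mp h2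
  have h3' := Fin.lt_def.mp h3
  have hwj := (w j).2
  have hm := m.2
  rcases le_or_gt ((w i).1) j.1 with hwi | hwi
  · rcases le_or_gt k.1 ((w m).1) with hwm | hwm
    · omega
    · -- w m < k : both k, m in InS at cut k-1
      have hk1 : 1 ≤ k.1 := by omega
      have hkn : k.1 - 1 < n - 1 := by have := k.2; omega
      exact two_in_contra hnd hl (c := ⟨k.1 - 1, hkn⟩)
        (mem_inS.mpr ⟨by show k.1 - 1 < k.1; omega, by show (w k).1 ≤ k.1 - 1; omega⟩)
        (mem_inS.mpr ⟨by show k.1 - 1 < m.1; omega, by show (w m).1 ≤ k.1 - 1; omega⟩)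
        (by omega)
  · -- j < w i : both i, j in OutS at cut j
    have hjn : j.1 < n - 1 := by omega
    exact two_out_contra hnd hl (c := ⟨j.1, hjn⟩)
      (mem_outS.mpr ⟨by show i.1 ≤ j.1; omega, by show j.1 < (w i).1; omega⟩)
      (mem_outS.mpr ⟨le_refl _, by show j.1 < (w j).1; omega⟩) (by omega)

end Final

end BoolPerm

open BoolPerm in
lemma nodup_of_card_toFinset {α : Type*} [DecidableEq α] {l : List α}
    (h : l.toFinset.card = l.length) : l.Nodup := by
  have h1 : l.toFinset.card = l.dedup.length := List.card_toFinset l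
  have hsub : l.dedup.Sublist l := List.dedup_sublist l
  have heq : l.dedup = l := hsub.eq_of_length (by omega)
  rw [← heq]
  exact List.nodup_dedup l

/-- For `w ∈ S_n`, the following are equivalent: (1) `w` avoids `321` and `3412`;
(2) some reduced word for `w` has all distinct letters; (3) every reduced word for
`w` has all distinct letters. -/
theorem avoids_321_3412_iff_reduced_words_distinct (n : ℕ) (w : Equiv.Perm (Fin n)) :
    ((¬Contains321 w ∧ ¬Contains3412 w) ↔
      ∃ l : List (Fin (n - 1)), IsReducedWord n w l ∧ l.Nodup) ∧
    ((∃ l : List (Fin (n - 1)), IsReducedWord n w l ∧ l.Nodup) ↔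
      ∀ l : List (Fin (n - 1)), IsReducedWord n w l → l.Nodup) := by
  classical
  obtain ⟨l0, hl0, hlen0⟩ := BoolPerm.exists_word_aux (BoolPerm.invNum w) w (le_refl _)
  have hred0 : IsReducedWord n w l0 :=
    ⟨hl0, fun l' hl' => hlen0.trans (by rw [← hl']; exact BoolPerm.invNum_le_length l')⟩
  have hlen_red : ∀ l, IsReducedWord n w l → l.length = BoolPerm.invNum w := by
    intro l hl
    have h1 : l.length ≤ l0.length := hl.2 l0 hl0
    have h2 : BoolPerm.invNum w ≤ l.length := by
      rw [← hl.1]; exact BoolPerm.invNum_le_length l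
    have h3 : l0.length ≤ BoolPerm.invNum w := hlen0
    omega
  constructor
  · constructor
    · rintro ⟨h321, h3412⟩
      refine ⟨l0, hred0, ?_⟩
      have hNsub := BoolPerm.nset_subset_toFinset hl0
      have hinv := BoolPerm.invNum_le_card_nset h321 h3412
      have hcard1 : (BoolPerm.NSet w).card ≤ l0.toFinset.card := Finset.card_le_card hNsub
      have hcard2 : l0.toFinset.card ≤ l0.length := List.toFinset_card_le l0
      have hlen : l0.length = BoolPerm.invNum w := hlen_red l0 hred0
      exact nodup_of_card_toFinset (by omega)
    · rintro ⟨l, hl, hnd⟩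
      exact ⟨BoolPerm.avoid321_of_nodup hnd hl.1, BoolPerm.avoid3412_of_nodup hnd hl.1⟩
  · constructor
    · rintro ⟨l, hl, hnd⟩ l' hl'
      have hNl : BoolPerm.NSet w = l.toFinset :=
        Finset.Subset.antisymm (BoolPerm.nset_subset_toFinset hl.1)
          (BoolPerm.toFinset_subset_nset hnd hl.1)
      have h1 : l.toFinset.card = l.length := List.toFinset_card_of_nodup hnd
      have h2 : l'.length = l.length := by rw [hlen_red l hl, hlen_red l' hl']
      have h3 := Finset.card_le_card (BoolPerm.nset_subset_toFinset hl'.1)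
      have h4 := List.toFinset_card_le l'
      apply nodup_of_card_toFinset
      rw [hNl] at h3
      omega
    · intro h3
      exact ⟨l0, hred0, h3 l0 hred0⟩
end

section
/- A permutation w in S_n avoids the pattern 321 if and only if no reduced word of w contains σ_i σ_{i+1} σ_i as a consecutive factor for any i. -/
namespace Braid
variable {n : ℕ}

def pos0 (n : ℕ) (d : Fin (n - 1)) : Fin n := ⟨d.1, by have := d.2; omega⟩
def pos1 (n : ℕ) (d : Fin (n - 1)) : Fin n := ⟨d.1 + 1, by have := d.2; omega⟩

lemma sgen_eq (d : Fin (n - 1)) : sgen n d = Equiv.swap (pos0 n d) (pos1 n d) := rfl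

lemma pos0_lt_pos1 (d : Fin (n - 1)) : pos0 n d < pos1 n d := by
  simp [pos0, pos1, Fin.lt_def]

lemma swap_lt (d : Fin (n - 1)) {x y : Fin n} (hxy : x < y)
    (h : ¬(x = pos0 n d ∧ y = pos1 n d)) :
    Equiv.swap (pos0 n d) (pos1 n d) x < Equiv.swap (pos0 n d) (pos1 n d) y := by
  have hpq : ((pos0 n d : Fin n) : ℕ) + 1 = ((pos1 n d : Fin n) : ℕ) := rfl
  have hxy' : (x : ℕ) < y := hxy
  rcases eq_or_ne x (pos0 n d) with rfl | hx0
  · have hyq : y ≠ pos1 n d := fun hy => h ⟨rfl, hy⟩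
    have hyp : y ≠ pos0 n d := ne_of_gt hxy
    rw [Equiv.swap_apply_left, Equiv.swap_apply_of_ne_of_ne hyp hyq]
    have h1 : ((pos0 n d : Fin n) : ℕ) ≠ (y : ℕ) := fun hh => hyp (Fin.ext hh.symm)
    have h2 : ((pos1 n d : Fin n) : ℕ) ≠ (y : ℕ) := fun hh => hyq (Fin.ext hh.symm)
    exact Fin.lt_def.2 (by omega)
  · rcases eq_or_ne x (pos1 n d) with rfl | hx1
    · have hyq : y ≠ pos1 n d := ne_of_gt hxy
      have hyp : y ≠ pos0 n d := by
        intro hh; subst hh; exact absurd hxy' (by omega)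
      rw [Equiv.swap_apply_right, Equiv.swap_apply_of_ne_of_ne hyp hyq]
      exact Fin.lt_def.2 (by omega)
    · rw [Equiv.swap_apply_of_ne_of_ne hx0 hx1]
      rcases eq_or_ne y (pos0 n d) with rfl | hy0
      · rw [Equiv.swap_apply_left]
        exact Fin.lt_def.2 (by omega)
      · rcases eq_or_ne y (pos1 n d) with rfl | hy1
        · rw [Equiv.swap_apply_right]
          have h1 : ((pos0 n d : Fin n) : ℕ) ≠ (x : ℕ) := fun hh => hx0 (Fin.ext hh.symm)
          exact Fin.lt_def.2 (by omega)
        · rw [Equiv.swap_apply_of_ne_of_ne hy0 hy1]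
          exact hxy

def Inv (w : Equiv.Perm (Fin n)) : ℕ :=
  (Finset.univ.filter (fun p : Fin n × Fin n => p.1 < p.2 ∧ w p.2 < w p.1)).card

lemma inv_one : Inv (1 : Equiv.Perm (Fin n)) = 0 := by
  simp only [Inv, Finset.card_eq_zero, Finset.filter_eq_empty_iff]
  rintro ⟨x, y⟩ _ ⟨h1, h2⟩
  exact absurd h1 (not_lt.2 (le_of_lt h2))


lemma mul_sgen_apply (w : Equiv.Perm (Fin n)) (d : Fin (n - 1)) (x : Fin n) :
    (w * sgen n d) x = w (Equiv.swap (pos0 n d) (pos1 n d) x) := rfl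

lemma sgen_mul_self (d : Fin (n - 1)) : sgen n d * sgen n d = 1 := by
  rw [sgen_eq]; exact Equiv.swap_mul_self _ _

lemma inv_mul_ascent (w : Equiv.Perm (Fin n)) (d : Fin (n - 1))
    (h : w (pos0 n d) < w (pos1 n d)) :
    Inv (w * sgen n d) = Inv w + 1 := by
  classical
  set s := Equiv.swap (pos0 n d) (pos1 n d) with hs
  have hss : ∀ x : Fin n, s (s x) = x := fun x => Equiv.swap_apply_self _ _ x
  have key : (Finset.univ.filter
        (fun p : Fin n × Fin n => p.1 < p.2 ∧ (w * sgen n d) p.2 < (w * sgen n d) p.1))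
      = insert (pos0 n d, pos1 n d)
        ((Finset.univ.filter (fun p : Fin n × Fin n => p.1 < p.2 ∧ w p.2 < w p.1)).image
          (fun p => (s p.1, s p.2))) := by
    ext ⟨x, y⟩
    simp only [Finset.mem_insert, Finset.mem_image, Finset.mem_filter, Finset.mem_univ,
      true_and, Prod.mk.injEq, Prod.exists]
    constructor
    · rintro ⟨hxy, hw⟩
      by_cases hc : x = pos0 n d ∧ y = pos1 n d
      · exact Or.inl ⟨hc.1, hc.2⟩
      · refine Or.inr ⟨s x, s y, ⟨swap_lt d hxy hc, ?_⟩, hss x, hss y⟩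
        rw [mul_sgen_apply, mul_sgen_apply, ← hs] at hw
        exact hw
    · rintro (⟨rfl, rfl⟩ | ⟨a, b, ⟨hab, hw⟩, rfl, rfl⟩)
      · refine ⟨pos0_lt_pos1 d, ?_⟩
        rw [mul_sgen_apply, mul_sgen_apply, ← hs, Equiv.swap_apply_left,
          Equiv.swap_apply_right]
        exact h
      · have hne : ¬(a = pos0 n d ∧ b = pos1 n d) := by
          rintro ⟨rfl, rfl⟩; exact absurd h (not_lt.2 (le_of_lt hw))
        refine ⟨swap_lt d hab hne, ?_⟩
        rw [mul_sgen_apply, mul_sgen_apply, ← hs, hss, hss]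
        exact hw
  have hinj : Function.Injective (fun p : Fin n × Fin n => (s p.1, s p.2)) := by
    rintro ⟨a, b⟩ ⟨c, e⟩ hpe
    simp only [Prod.mk.injEq] at hpe
    exact Prod.ext (s.injective hpe.1) (s.injective hpe.2)
  have hnotmem : (pos0 n d, pos1 n d) ∉
      (Finset.univ.filter (fun p : Fin n × Fin n => p.1 < p.2 ∧ w p.2 < w p.1)).image
        (fun p => (s p.1, s p.2)) := by
    simp only [Finset.mem_image, Finset.mem_filter, Finset.mem_univ, true_and,
      Prod.mk.injEq, Prod.exists, not_exists]
    rintro a b ⟨⟨hab, -⟩, ha, hb⟩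
    have ha' : a = pos1 n d := by
      have := congrArg s ha; rwa [hss, Equiv.swap_apply_left] at this
    have hb' : b = pos0 n d := by
      have := congrArg s hb; rwa [hss, Equiv.swap_apply_right] at this
    subst ha'; subst hb'
    exact absurd hab (not_lt.2 (le_of_lt (pos0_lt_pos1 d)))
  rw [Inv, key, Finset.card_insert_of_notMem hnotmem,
    Finset.card_image_of_injective _ hinj]
  rfl

lemma inv_mul_descent (w : Equiv.Perm (Fin n)) (d : Fin (n - 1))
    (h : w (pos1 n d) < w (pos0 n d)) :
    Inv w = Inv (w * sgen n d) + 1 := by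
  have h2 : (w * sgen n d) (pos0 n d) < (w * sgen n d) (pos1 n d) := by
    rw [mul_sgen_apply, mul_sgen_apply, Equiv.swap_apply_left, Equiv.swap_apply_right]
    exact h
  have := inv_mul_ascent (w * sgen n d) d h2
  rwa [mul_assoc, sgen_mul_self, mul_one] at this

lemma pos_ne (d : Fin (n - 1)) (w : Equiv.Perm (Fin n)) :
    w (pos0 n d) ≠ w (pos1 n d) :=
  fun h => absurd (w.injective h) (ne_of_lt (pos0_lt_pos1 d))

lemma inv_step_le (w : Equiv.Perm (Fin n)) (d : Fin (n - 1)) :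
    Inv (w * sgen n d) ≤ Inv w + 1 := by
  rcases lt_or_gt_of_ne (pos_ne d w) with h | h
  · exact le_of_eq (inv_mul_ascent w d h)
  · have := inv_mul_descent w d h; omega

lemma inv_step_ge (w : Equiv.Perm (Fin n)) (d : Fin (n - 1)) :
    Inv w ≤ Inv (w * sgen n d) + 1 := by
  rcases lt_or_gt_of_ne (pos_ne d w) with h | h
  · have := inv_mul_ascent w d h; omega
  · exact le_of_eq (inv_mul_descent w d h)


lemma inv_mul_prod_le (l : List (Fin (n - 1))) :
    ∀ a : Equiv.Perm (Fin n), Inv (a * (l.map (sgen n)).prod) ≤ Inv a + l.length := by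
  induction l with
  | nil => intro a; simp
  | cons d l ih =>
    intro a
    have h1 : a * ((d :: l).map (sgen n)).prod = (a * sgen n d) * (l.map (sgen n)).prod := by
      simp [mul_assoc]
    rw [h1]
    calc Inv ((a * sgen n d) * (l.map (sgen n)).prod) ≤ Inv (a * sgen n d) + l.length := ih _
      _ ≤ Inv a + 1 + l.length := by have := inv_step_le a d; omega
      _ = Inv a + (d :: l).length := by simp; omega

lemma inv_le_length (l : List (Fin (n - 1))) : Inv ((l.map (sgen n)).prod) ≤ l.length := by
  have := inv_mul_prod_le l (1 : Equiv.Perm (Fin n))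
  rwa [one_mul, inv_one, zero_add] at this

lemma strictMono_le {f : Fin n → Fin n} (hf : StrictMono f) : ∀ x : Fin n, (x : ℕ) ≤ f x := by
  have key : ∀ k : ℕ, ∀ x : Fin n, (x : ℕ) = k → k ≤ (f x : ℕ) := by
    intro k
    induction k with
    | zero => intro x _; omega
    | succ m ih =>
      intro x hx
      have hm : m < n := by omega
      have hlt : (⟨m, hm⟩ : Fin n) < x := by simp [Fin.lt_def]; omega
      have := ih ⟨m, hm⟩ rfl
      have := hf hlt
      simp only [Fin.lt_def] at this
      omega
  intro x; exact key x x rfl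

lemma eq_one_of_strictMono (w : Equiv.Perm (Fin n)) (h : StrictMono ⇑w) : w = 1 := by
  have h2 : StrictMono ⇑w⁻¹ := by
    intro x y hxy
    rcases lt_trichotomy (w⁻¹ x) (w⁻¹ y) with h' | h' | h'
    · exact h'
    · exact absurd (by rw [← w.apply_symm_apply x, ← w.apply_symm_apply y]; exact congrArg _ h')
        (ne_of_lt hxy)
    · have := h h'
      rw [show w (w⁻¹ x) = x from w.apply_symm_apply x,
        show w (w⁻¹ y) = y from w.apply_symm_apply y] at this
      exact absurd hxy (not_lt.2 (le_of_lt this))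
  ext x
  have h3 := strictMono_le h x
  have h4 := strictMono_le h2 (w x)
  rw [show w⁻¹ (w x) = x from w.symm_apply_apply x] at h4
  simp only [Equiv.Perm.coe_one, id_eq]
  omega

lemma eq_one_of_inv_zero (w : Equiv.Perm (Fin n)) (h : Inv w = 0) : w = 1 := by
  apply eq_one_of_strictMono
  intro x y hxy
  rcases lt_trichotomy (w x) (w y) with h' | h' | h'
  · exact h'
  · exact absurd (w.injective h') (ne_of_lt hxy)
  · exfalso
    have : (x, y) ∈ Finset.univ.filter
        (fun p : Fin n × Fin n => p.1 < p.2 ∧ w p.2 < w p.1) := by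
      simp [hxy, h']
    rw [Inv, Finset.card_eq_zero] at h
    simp [h] at this

lemma exists_descent_aux (w : Equiv.Perm (Fin n)) :
    ∀ k : ℕ, ∀ p q : Fin n, (q : ℕ) - (p : ℕ) ≤ k → p < q → w q < w p →
    ∃ m : ℕ, ∃ h1 : m + 1 < n, (p : ℕ) ≤ m ∧ m + 1 ≤ (q : ℕ) ∧
      w ⟨m + 1, h1⟩ < w ⟨m, by omega⟩ := by
  intro k
  induction k with
  | zero =>
    intro p q hk hpq _
    rw [Fin.lt_def] at hpq
    omega
  | succ k ih =>
    intro p q hk hpq hw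
    have hq : (q : ℕ) < n := q.2
    have hpq' : (p : ℕ) < q := hpq
    have hp1 : (p : ℕ) + 1 < n := by omega
    set p1 : Fin n := ⟨(p : ℕ) + 1, hp1⟩ with hp1def
    have hv : (p1 : ℕ) = (p : ℕ) + 1 := rfl
    by_cases hd : w p1 < w p
    · exact ⟨(p : ℕ), hp1, le_refl _, by omega, hd⟩
    · have hne : w p ≠ w p1 := fun hh => by
        have := w.injective hh
        simp [Fin.ext_iff, hp1def] at this
      have hlt : w p < w p1 := lt_of_le_of_ne (not_lt.1 hd) hne
      have hpq1 : p1 ≠ q := by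
        intro hh
        rw [hh] at hlt
        exact lt_asymm hlt hw
      have hp1q : p1 < q := by
        rw [Fin.lt_def]
        have hne2 : (p1 : ℕ) ≠ q := fun hh => hpq1 (Fin.ext hh)
        omega
      obtain ⟨m, hm1, hm2, hm3, hm4⟩ := ih p1 q (by omega) hp1q (hw.trans hlt)
      exact ⟨m, hm1, by omega, hm3, hm4⟩

lemma exists_descent (w : Equiv.Perm (Fin n)) (p q : Fin n) (hpq : p < q)
    (hw : w q < w p) :
    ∃ m : ℕ, ∃ h1 : m + 1 < n, (p : ℕ) ≤ m ∧ m + 1 ≤ (q : ℕ) ∧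
      w ⟨m + 1, h1⟩ < w ⟨m, by omega⟩ :=
  exists_descent_aux w ((q : ℕ) - (p : ℕ)) p q (le_refl _) hpq hw


lemma exists_word_aux : ∀ k : ℕ, ∀ w : Equiv.Perm (Fin n), Inv w = k →
    ∃ l : List (Fin (n - 1)), (l.map (sgen n)).prod = w ∧ l.length = k := by
  intro k
  induction k using Nat.strong_induction_on with
  | _ k ih =>
    intro w hw
    rcases Nat.eq_zero_or_pos k with rfl | hk
    · exact ⟨[], by rw [eq_one_of_inv_zero w hw]; rfl, rfl⟩
    · have hne : (Finset.univ.filter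
          (fun p : Fin n × Fin n => p.1 < p.2 ∧ w p.2 < w p.1)).Nonempty := by
        rw [← Finset.card_pos, ← Inv, hw]; exact hk
      obtain ⟨⟨x, y⟩, hxy⟩ := hne
      simp only [Finset.mem_filter, Finset.mem_univ, true_and] at hxy
      obtain ⟨m, h1, _, _, hdes⟩ := exists_descent w x y hxy.1 hxy.2
      set d : Fin (n - 1) := ⟨m, by omega⟩ with hd
      have hdes' : w (pos1 n d) < w (pos0 n d) := hdes
      have hInv := inv_mul_descent w d hdes'
      obtain ⟨l, hl1, hl2⟩ := ih (k - 1) (by omega) (w * sgen n d) (by omega)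
      refine ⟨l ++ [d], ?_, by simp [hl2]; omega⟩
      rw [List.map_append, List.prod_append, hl1]
      simp [mul_assoc, sgen_mul_self]

lemma exists_word (w : Equiv.Perm (Fin n)) :
    ∃ l : List (Fin (n - 1)), (l.map (sgen n)).prod = w ∧ l.length = Inv w :=
  exists_word_aux (Inv w) w rfl

lemma reduced_iff (w : Equiv.Perm (Fin n)) (l : List (Fin (n - 1))) :
    IsReducedWord n w l ↔ (l.map (sgen n)).prod = w ∧ l.length = Inv w := by
  constructor
  · rintro ⟨h1, h2⟩
    refine ⟨h1, le_antisymm ?_ ?_⟩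
    · obtain ⟨l', hl1, hl2⟩ := exists_word w
      exact hl2 ▸ h2 l' hl1
    · rw [← h1]; exact inv_le_length l
  · rintro ⟨h1, h2⟩
    refine ⟨h1, fun l' hl' => ?_⟩
    rw [h2, ← hl']
    exact inv_le_length l'

lemma prefix_inv (w : Equiv.Perm (Fin n)) (l p q : List (Fin (n - 1)))
    (hred : IsReducedWord n w l) (hl : l = p ++ q) :
    Inv ((p.map (sgen n)).prod) = p.length := by
  rw [reduced_iff] at hred
  obtain ⟨h1, h2⟩ := hred
  have h3 : Inv w ≤ Inv ((p.map (sgen n)).prod) + q.length := by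
    rw [← h1, hl, List.map_append, List.prod_append]
    exact inv_mul_prod_le q _
  have h4 : Inv ((p.map (sgen n)).prod) ≤ p.length := inv_le_length p
  have h5 : l.length = p.length + q.length := by rw [hl]; simp
  omega

lemma prefix_ascent (w : Equiv.Perm (Fin n)) (l p q : List (Fin (n - 1)))
    (d : Fin (n - 1)) (hred : IsReducedWord n w l) (hl : l = p ++ d :: q) :
    ((p.map (sgen n)).prod) (pos0 n d) < ((p.map (sgen n)).prod) (pos1 n d) := by
  set u := (p.map (sgen n)).prod with hu
  have h1 : Inv u = p.length := prefix_inv w l p (d :: q) hred hl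
  have h2 : Inv ((( p ++ [d]).map (sgen n)).prod) = p.length + 1 := by
    have := prefix_inv w l (p ++ [d]) q hred (by rw [hl]; simp)
    simpa using this
  have h3 : ((p ++ [d]).map (sgen n)).prod = u * sgen n d := by
    rw [List.map_append, List.prod_append]; simp [hu]
  rw [h3] at h2
  rcases lt_or_gt_of_ne (pos_ne d u) with h | h
  · exact h
  · have := inv_mul_descent u d h
    omega


lemma contains_mul_swap (z : Equiv.Perm (Fin n)) (d : Fin (n - 1)) (a b c : Fin n)
    (hab : a < b) (hbc : b < c) (h1 : z c < z b) (h2 : z b < z a)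
    (hna : ¬(a = pos0 n d ∧ b = pos1 n d)) (hnb : ¬(b = pos0 n d ∧ c = pos1 n d)) :
    Contains321 (z * sgen n d) := by
  set s := Equiv.swap (pos0 n d) (pos1 n d) with hs
  have hss : ∀ x : Fin n, s (s x) = x := fun x => Equiv.swap_apply_self _ _ x
  refine ⟨s a, s b, s c, swap_lt d hab hna, swap_lt d hbc hnb, ?_, ?_⟩
  · rw [mul_sgen_apply, mul_sgen_apply, ← hs, hss, hss]; exact h1
  · rw [mul_sgen_apply, mul_sgen_apply, ← hs, hss, hss]; exact h2

lemma contains_mul_ascent (z : Equiv.Perm (Fin n)) (d : Fin (n - 1))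
    (hz : Contains321 z) (h : z (pos0 n d) < z (pos1 n d)) :
    Contains321 (z * sgen n d) := by
  obtain ⟨a, b, c, hab, hbc, h1, h2⟩ := hz
  refine contains_mul_swap z d a b c hab hbc h1 h2 ?_ ?_
  · rintro ⟨rfl, rfl⟩; exact lt_asymm h h2
  · rintro ⟨rfl, rfl⟩; exact lt_asymm h h1


lemma contains_of_prefix (w : Equiv.Perm (Fin n)) (l : List (Fin (n - 1)))
    (hred : IsReducedWord n w l) :
    ∀ q p : List (Fin (n - 1)), l = p ++ q →
      Contains321 ((p.map (sgen n)).prod) → Contains321 w := by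
  intro q
  induction q with
  | nil =>
    intro p hp hc
    have : (p.map (sgen n)).prod = w := by rw [← hred.1, hp]; simp
    rwa [this] at hc
  | cons d q ih =>
    intro p hp hc
    have hasc := prefix_ascent w l p q d hred hp
    have hc2 := contains_mul_ascent _ d hc hasc
    have : ((p ++ [d]).map (sgen n)).prod = (p.map (sgen n)).prod * sgen n d := by
      rw [List.map_append, List.prod_append]; simp
    exact ih (p ++ [d]) (by rw [hp]; simp) (by rwa [this])

lemma contains_of_braid_factor (w : Equiv.Perm (Fin n)) (l x y : List (Fin (n - 1)))
    (i j : Fin (n - 1)) (hj : (j : ℕ) = (i : ℕ) + 1)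
    (hred : IsReducedWord n w l) (hl : l = x ++ i :: j :: i :: y) :
    Contains321 w := by
  set u := (x.map (sgen n)).prod with hu
  have hp0j : pos0 n j = pos1 n i := Fin.ext hj
  set P0 := pos0 n i with hP0
  set P1 := pos1 n i with hP1
  set P2 := pos1 n j with hP2
  have hv0 : (P0 : ℕ) = (i : ℕ) := rfl
  have hv1 : (P1 : ℕ) = (i : ℕ) + 1 := rfl
  have hv2 : (P2 : ℕ) = (j : ℕ) + 1 := rfl
  have n01 : P0 ≠ P1 := by rw [Fin.ne_iff_vne]; omega
  have n02 : P0 ≠ P2 := by rw [Fin.ne_iff_vne]; omega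
  have n12 : P1 ≠ P2 := by rw [Fin.ne_iff_vne]; omega
  have si : sgen n i = Equiv.swap P0 P1 := rfl
  have sj : sgen n j = Equiv.swap P1 P2 := by rw [sgen_eq, hp0j]
  have A1 : u P0 < u P1 := prefix_ascent w l x (j :: i :: y) i hred hl
  have A2 : (u * sgen n i) (pos0 n j) < (u * sgen n i) (pos1 n j) := by
    have := prefix_ascent w l (x ++ [i]) (i :: y) j hred (by rw [hl]; simp)
    rwa [List.map_append, List.prod_append,
      show ([i].map (sgen n)).prod = sgen n i by simp] at this
  have A3 : (u * sgen n i * sgen n j) P0 < (u * sgen n i * sgen n j) P1 := by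
    have := prefix_ascent w l (x ++ [i, j]) y i hred (by rw [hl]; simp)
    rwa [List.map_append, List.prod_append,
      show ([i, j].map (sgen n)).prod = sgen n i * sgen n j by simp] at this
  rw [hp0j] at A2
  have e1 : (Equiv.swap P1 P2) P0 = P0 := Equiv.swap_apply_of_ne_of_ne n01 n02
  have e2 : (Equiv.swap P0 P1) P0 = P1 := Equiv.swap_apply_left _ _
  have e3 : (Equiv.swap P1 P2) P1 = P2 := Equiv.swap_apply_left _ _
  have e4 : (Equiv.swap P0 P1) P2 = P2 := Equiv.swap_apply_of_ne_of_ne n02.symm n12.symm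
  have e5 : (Equiv.swap P1 P2) P2 = P1 := Equiv.swap_apply_right _ _
  have e6 : (Equiv.swap P0 P1) P1 = P0 := Equiv.swap_apply_right _ _
  simp only [Equiv.Perm.mul_apply, si, e6, e4] at A2
  simp only [Equiv.Perm.mul_apply, si, sj, e1, e2, e3, e4] at A3
  set z := u * sgen n i * sgen n j * sgen n i with hz
  have z0 : z P0 = u P2 := by
    simp only [hz, Equiv.Perm.mul_apply, si, sj, e2, e3, e4]
  have z1 : z P1 = u P1 := by
    simp only [hz, Equiv.Perm.mul_apply, si, sj, e6, e1, e2]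
  have z2 : z P2 = u P0 := by
    simp only [hz, Equiv.Perm.mul_apply, si, sj, e4, e5, e6]
  have hcz : Contains321 z := by
    refine ⟨P0, P1, P2, ?_, ?_, ?_, ?_⟩
    · rw [Fin.lt_def]; omega
    · rw [Fin.lt_def]; omega
    · rw [z2, z1]; exact A1
    · rw [z1, z0]; exact A3
  have hprod : (((x ++ [i, j, i]).map (sgen n)).prod) = z := by
    rw [List.map_append, List.prod_append, ← hu]
    simp [hz, mul_assoc]
  exact contains_of_prefix w l hred y (x ++ [i, j, i]) (by rw [hl]; simp)
    (by rwa [hprod])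


lemma braid_of_contains_aux : ∀ k : ℕ, ∀ w : Equiv.Perm (Fin n), Inv w = k →
    Contains321 w →
    ∃ l : List (Fin (n - 1)), IsReducedWord n w l ∧
      ∃ (x y : List (Fin (n - 1))) (i j : Fin (n - 1)),
        (j : ℕ) = (i : ℕ) + 1 ∧ l = x ++ i :: j :: i :: y := by
  intro k
  induction k using Nat.strong_induction_on with
  | _ k ih =>
    intro w hw hc
    obtain ⟨a, b, c, hab, hbc, h1, h2⟩ := hc
    have hab' : (a : ℕ) < b := hab
    have hbc' : (b : ℕ) < c := hbc
    have hcn : (c : ℕ) < n := c.2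
    -- helper to recurse after one descent step
    have step : ∀ d : Fin (n - 1), w (pos1 n d) < w (pos0 n d) →
        Contains321 (w * sgen n d) →
        ∃ l : List (Fin (n - 1)), IsReducedWord n w l ∧
          ∃ (x y : List (Fin (n - 1))) (i j : Fin (n - 1)),
            (j : ℕ) = (i : ℕ) + 1 ∧ l = x ++ i :: j :: i :: y := by
      intro d hdes hc'
      have hInv := inv_mul_descent w d hdes
      obtain ⟨l', hred', x, y, i, j, hij, hl'⟩ :=
        ih (Inv (w * sgen n d)) (by omega) (w * sgen n d) rfl hc'
      refine ⟨l' ++ [d], ?_, x, y ++ [d], i, j, hij, by rw [hl']; simp⟩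
      rw [reduced_iff] at hred' ⊢
      constructor
      · rw [List.map_append, List.prod_append, hred'.1]
        simp [mul_assoc, sgen_mul_self]
      · simp only [List.length_append, List.length_cons, List.length_nil, hred'.2]
        omega
    by_cases hc1 : (b : ℕ) + 1 < (c : ℕ)
    · -- find a descent in [b, c)
      obtain ⟨m, hm1, hm2, hm3, hdes⟩ := exists_descent w b c hbc h1
      set d : Fin (n - 1) := ⟨m, by omega⟩ with hd
      have hdes' : w (pos1 n d) < w (pos0 n d) := hdes
      refine step d hdes' (contains_mul_swap w d a b c hab hbc h1 h2 ?_ ?_)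
      · rintro ⟨ha, -⟩
        have hav : (a : ℕ) = m := by rw [ha]; rfl
        omega
      · rintro ⟨hb, hc⟩
        have hbv : (b : ℕ) = m := by rw [hb]; rfl
        have hcv : (c : ℕ) = m + 1 := by rw [hc]; rfl
        omega
    · have hc1' : (c : ℕ) = (b : ℕ) + 1 := by omega
      by_cases hc2 : (a : ℕ) + 1 < (b : ℕ)
      · obtain ⟨m, hm1, hm2, hm3, hdes⟩ := exists_descent w a b hab h2
        set d : Fin (n - 1) := ⟨m, by omega⟩ with hd
        have hdes' : w (pos1 n d) < w (pos0 n d) := hdes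
        refine step d hdes' (contains_mul_swap w d a b c hab hbc h1 h2 ?_ ?_)
        · rintro ⟨ha, hb⟩
          have hav : (a : ℕ) = m := by rw [ha]; rfl
          have hbv : (b : ℕ) = m + 1 := by rw [hb]; rfl
          omega
        · rintro ⟨hb, -⟩
          have hbv : (b : ℕ) = m := by rw [hb]; rfl
          omega
      · -- consecutive triple at a
        have hb' : (b : ℕ) = (a : ℕ) + 1 := by omega
        have hi : (a : ℕ) < n - 1 := by omega
        have hjlt : (a : ℕ) + 1 < n - 1 := by omega
        set i : Fin (n - 1) := ⟨(a : ℕ), hi⟩ with hidef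
        set j : Fin (n - 1) := ⟨(a : ℕ) + 1, hjlt⟩ with hjdef
        have hpa : pos0 n i = a := Fin.ext rfl
        have hpb : pos1 n i = b := Fin.ext (by simp [pos1, hidef]; omega)
        have hpb' : pos0 n j = b := Fin.ext (by simp [pos0, hjdef]; omega)
        have hpc : pos1 n j = c := Fin.ext (by simp [pos1, hjdef]; omega)
        -- three descents
        have D1 : w (pos1 n i) < w (pos0 n i) := by rw [hpa, hpb]; exact h2
        have E1 := inv_mul_descent w i D1
        set w1 := w * sgen n i with hw1
        have n_ab : a ≠ b := ne_of_lt hab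
        have n_ac : a ≠ c := ne_of_lt (hab.trans hbc)
        have n_bc : b ≠ c := ne_of_lt hbc
        have f1 : w1 a = w b := by
          rw [hw1, Equiv.Perm.mul_apply, sgen_eq, hpa, hpb, Equiv.swap_apply_left]
        have f2 : w1 b = w a := by
          rw [hw1, Equiv.Perm.mul_apply, sgen_eq, hpa, hpb, Equiv.swap_apply_right]
        have f3 : w1 c = w c := by
          rw [hw1, Equiv.Perm.mul_apply, sgen_eq, hpa, hpb,
            Equiv.swap_apply_of_ne_of_ne n_ac.symm n_bc.symm]
        have D2 : w1 (pos1 n j) < w1 (pos0 n j) := by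
          rw [hpb', hpc, f2, f3]; exact h1.trans h2
        have E2 := inv_mul_descent w1 j D2
        set w2 := w1 * sgen n j with hw2
        have g1 : w2 a = w b := by
          rw [hw2, Equiv.Perm.mul_apply, sgen_eq, hpb', hpc,
            Equiv.swap_apply_of_ne_of_ne n_ab n_ac, f1]
        have g2 : w2 b = w c := by
          rw [hw2, Equiv.Perm.mul_apply, sgen_eq, hpb', hpc, Equiv.swap_apply_left, f3]
        have D3 : w2 (pos1 n i) < w2 (pos0 n i) := by
          rw [hpa, hpb, g1, g2]; exact h1
        have E3 := inv_mul_descent w2 i D3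
        set w3 := w2 * sgen n i with hw3
        obtain ⟨l3, hl3p, hl3len⟩ := exists_word w3
        refine ⟨l3 ++ [i, j, i], ?_, l3, [], i, j, by simp [hidef, hjdef], by simp⟩
        rw [reduced_iff]
        constructor
        · rw [List.map_append, List.prod_append, hl3p]
          have hlprod : ([i, j, i].map (sgen n)).prod = sgen n i * sgen n j * sgen n i := by
            simp [mul_assoc]
          have cancel : ∀ (v : Equiv.Perm (Fin n)) (d : Fin (n - 1)),
              (v * sgen n d) * sgen n d = v := by
            intro v d; rw [mul_assoc, sgen_mul_self, mul_one]
          rw [hlprod, ← mul_assoc, ← mul_assoc, hw3, cancel, hw2, cancel, hw1, cancel]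
        · simp only [List.length_append, List.length_cons, List.length_nil, hl3len]
          omega

lemma braid_of_contains (w : Equiv.Perm (Fin n)) (hc : Contains321 w) :
    ∃ l : List (Fin (n - 1)), IsReducedWord n w l ∧
      ∃ (x y : List (Fin (n - 1))) (i j : Fin (n - 1)),
        (j : ℕ) = (i : ℕ) + 1 ∧ l = x ++ i :: j :: i :: y :=
  braid_of_contains_aux (Inv w) w rfl hc

end Braid

/-- `w ∈ S_n` avoids the pattern `321` iff no reduced word of `w` contains
`σ_i σ_{i+1} σ_i` as a consecutive factor for any `i`. -/
theorem avoids_321_iff_no_short_braid_factor (n : ℕ) (w : Equiv.Perm (Fin n)) :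
    ¬Contains321 w ↔
      ∀ l : List (Fin (n - 1)), IsReducedWord n w l →
        ¬∃ (x y : List (Fin (n - 1))) (i j : Fin (n - 1)),
          (j : ℕ) = (i : ℕ) + 1 ∧ l = x ++ i :: j :: i :: y := by
  constructor
  · rintro hav l hred ⟨x, y, i, j, hj, hl⟩
    exact hav (Braid.contains_of_braid_factor w l x y i j hj hred hl)
  · intro hno hc
    obtain ⟨l, hred, x, y, i, j, hj, hl⟩ := Braid.braid_of_contains w hc
    exact hno l hred ⟨x, y, i, j, hj, hl⟩
end

section
/- Let G be a Coxeter group with generating set S, and let w ∈ G have a reduced word containing some generator s at least twice. Then the principal order ideal of w in the Bruhat order is not a lattice; specifically, there exist generators s, t with st ≠ ts such that the four elements s, t, st, ts all lie below w in Bruhat order, and s and t have no join within the ideal. -/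
/-- Bruhat order on a Coxeter group, via the subword property: `v ≤ w` iff some
reduced word of `v` is a (not necessarily consecutive) subword of some reduced
word of `w`. -/
def CoxeterBruhatLe {B W : Type*} [Group W] {M : CoxeterMatrix B}
    (cs : CoxeterSystem M W) (v w : W) : Prop :=
  ∃ lw lv : List B, cs.IsReduced lw ∧ cs.wordProd lw = w ∧
    cs.IsReduced lv ∧ cs.wordProd lv = v ∧ lv.Sublist lw

private lemma exists_two_split {B : Type*} [DecidableEq B] {l : List B} {a : B}
    (h : 2 ≤ l.count a) : ∃ l1 l2 l3, l = l1 ++ a :: l2 ++ a :: l3 := by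
  induction l with
  | nil => simp at h
  | cons b l ih =>
    by_cases hb : b = a
    · subst hb
      have h1 : 1 ≤ l.count b := by
        have : List.count b (b :: l) = List.count b l + 1 := List.count_cons_self
        omega
      obtain ⟨p, q, hpq⟩ := List.append_of_mem (List.count_pos_iff.mp h1)
      exact ⟨[], p, q, by simp [hpq]⟩
    · have : 2 ≤ l.count a := by
        rw [List.count_cons_of_ne hb] at h
        exact h
      obtain ⟨l1, l2, l3, hl⟩ := ih this
      exact ⟨b :: l1, l2, l3, by simp [hl]⟩

private lemma simple_comm_wordProd {B W : Type*} [Group W] {M : CoxeterMatrix B}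
    (cs : CoxeterSystem M W) {i : B} {l : List B}
    (h : ∀ t ∈ l, cs.simple i * cs.simple t = cs.simple t * cs.simple i) :
    cs.simple i * cs.wordProd l = cs.wordProd l * cs.simple i := by
  induction l with
  | nil => simp
  | cons b l ih =>
    rw [cs.wordProd_cons, ← mul_assoc, h b (by simp), mul_assoc,
      ih fun t ht => h t (by simp [ht]), ← mul_assoc]

private lemma length_simple_mul_simple {B W : Type*} [Group W] {M : CoxeterMatrix B}
    (cs : CoxeterSystem M W) {i j : B}
    (hne : cs.simple i * cs.simple j ≠ cs.simple j * cs.simple i) :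
    cs.length (cs.simple i * cs.simple j) = 2 := by
  have hle : cs.length (cs.simple i * cs.simple j) ≤ 2 := by
    simpa [CoxeterSystem.wordProd_cons] using cs.length_wordProd_le [i, j]
  have hpar := cs.length_mul_mod_two (cs.simple i) (cs.simple j)
  rw [cs.length_simple, cs.length_simple] at hpar
  have hne1 : cs.simple i * cs.simple j ≠ 1 := by
    intro h
    apply hne
    have hij : cs.simple i = cs.simple j := by
      rw [← cs.inv_simple i]; exact inv_eq_of_mul_eq_one_right h
    rw [hij]
  have h0 : cs.length (cs.simple i * cs.simple j) ≠ 0 := fun h0 =>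
    hne1 (cs.length_eq_zero_iff.mp h0)
  omega

/-- If `v ≤ z` in Bruhat order and `ℓ(v) = ℓ(z)`, then `v = z`. -/
private lemma eq_of_bruhat_le_of_length {B W : Type*} [Group W] {M : CoxeterMatrix B}
    (cs : CoxeterSystem M W) {v z : W} (h : CoxeterBruhatLe cs v z)
    (hlen : cs.length z ≤ cs.length v) : v = z := by
  obtain ⟨lw, lv, hrw, hpw, hrv, hpv, hsub⟩ := h
  have h1 : lv.length = cs.length v := by rw [← hpv]; exact hrv.symm
  have h2 : lw.length = cs.length z := by rw [← hpw]; exact hrw.symm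
  have : lv = lw := hsub.eq_of_length_le (by omega)
  rw [← hpv, ← hpw, this]

private lemma bruhat_le_length {B W : Type*} [Group W] {M : CoxeterMatrix B}
    (cs : CoxeterSystem M W) {v z : W} (h : CoxeterBruhatLe cs v z) :
    cs.length v ≤ cs.length z := by
  obtain ⟨lw, lv, hrw, hpw, hrv, hpv, hsub⟩ := h
  have h1 : lv.length = cs.length v := by rw [← hpv]; exact hrv.symm
  have h2 : lw.length = cs.length z := by rw [← hpw]; exact hrw.symm
  have := hsub.length_le
  omega

/-- If `w` has a reduced word in which some generator appears at least twice, then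
there are non-commuting generators `s = simple i` and `t = simple j` with
`s, t, st, ts` all below `w` in Bruhat order, such that `s` and `t` have no join
within the principal order ideal of `w`; in particular that ideal is not a lattice. -/
theorem bruhat_poi_not_lattice_of_repeated_letter {B W : Type*} [Group W] [DecidableEq B]
    {M : CoxeterMatrix B} (cs : CoxeterSystem M W) (w : W) (l : List B) (s : B)
    (hred : cs.IsReduced l) (hprod : cs.wordProd l = w) (hcount : 2 ≤ l.count s) :
    ∃ i j : B,
      cs.simple i * cs.simple j ≠ cs.simple j * cs.simple i ∧
      CoxeterBruhatLe cs (cs.simple i) w ∧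
      CoxeterBruhatLe cs (cs.simple j) w ∧
      CoxeterBruhatLe cs (cs.simple i * cs.simple j) w ∧
      CoxeterBruhatLe cs (cs.simple j * cs.simple i) w ∧
      ¬∃ z : W, CoxeterBruhatLe cs z w ∧
        CoxeterBruhatLe cs (cs.simple i) z ∧ CoxeterBruhatLe cs (cs.simple j) z ∧
        ∀ z' : W, CoxeterBruhatLe cs z' w →
          CoxeterBruhatLe cs (cs.simple i) z' → CoxeterBruhatLe cs (cs.simple j) z' →
          CoxeterBruhatLe cs z z' := by
  obtain ⟨l1, l2, l3, hl⟩ := exists_two_split hcount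
  -- there must be a non-commuting letter between the two occurrences of `s`
  have hex : ∃ t ∈ l2, cs.simple s * cs.simple t ≠ cs.simple t * cs.simple s := by
    by_contra hc
    push_neg at hc
    have hcomm := simple_comm_wordProd cs hc
    have hprod' : cs.wordProd l = cs.wordProd (l1 ++ l2 ++ l3) := by
      rw [hl]
      simp only [CoxeterSystem.wordProd_append, CoxeterSystem.wordProd_cons, ← mul_assoc]
      rw [mul_assoc (cs.wordProd l1), hcomm, ← mul_assoc,
        mul_assoc _ (cs.simple s) (cs.simple s), cs.simple_mul_simple_self, mul_one]
    have h1 := cs.length_wordProd_le (l1 ++ l2 ++ l3)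
    rw [← hprod'] at h1
    rw [CoxeterSystem.IsReduced] at hred
    rw [hred, hl] at h1
    simp only [List.length_append, List.length_cons] at h1
    omega
  obtain ⟨t, htmem, hnc⟩ := hex
  obtain ⟨a, b, hab⟩ := List.append_of_mem htmem
  subst hab
  -- key sublists
  have hsubst : [s, t].Sublist l := by
    rw [hl]
    refine List.Sublist.trans ?_ (List.sublist_append_left _ (s :: l3))
    refine List.Sublist.trans ?_ (List.sublist_append_right l1 _)
    refine List.Sublist.cons₂ s ?_
    rw [List.singleton_sublist]
    simp
  have hsubts : [t, s].Sublist l := by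
    rw [hl]
    have h1 : [t].Sublist (l1 ++ s :: (a ++ t :: b)) := by
      rw [List.singleton_sublist]; simp
    have h2 : [s].Sublist (s :: l3) := by
      rw [List.singleton_sublist]; simp
    exact h1.append h2
  have hsne : cs.simple t * cs.simple s ≠ cs.simple s * cs.simple t := fun h => hnc h.symm
  have hlenst : cs.length (cs.simple s * cs.simple t) = 2 := length_simple_mul_simple cs hnc
  have hlents : cs.length (cs.simple t * cs.simple s) = 2 := length_simple_mul_simple cs hsne
  have hredst : cs.IsReduced [s, t] := by
    rw [CoxeterSystem.IsReduced]
    simpa [CoxeterSystem.wordProd_cons] using hlenst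
  have hredts : cs.IsReduced [t, s] := by
    rw [CoxeterSystem.IsReduced]
    simpa [CoxeterSystem.wordProd_cons] using hlents
  have hreds : cs.IsReduced [s] := by
    rw [CoxeterSystem.IsReduced]; simp [CoxeterSystem.wordProd_cons, cs.length_simple]
  have hredt : cs.IsReduced [t] := by
    rw [CoxeterSystem.IsReduced]; simp [CoxeterSystem.wordProd_cons, cs.length_simple]
  have hpst : cs.wordProd [s, t] = cs.simple s * cs.simple t := by
    simp [CoxeterSystem.wordProd_cons]
  have hpts : cs.wordProd [t, s] = cs.simple t * cs.simple s := by
    simp [CoxeterSystem.wordProd_cons]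
  have hstw : CoxeterBruhatLe cs (cs.simple s * cs.simple t) w :=
    ⟨l, [s, t], hred, hprod, hredst, hpst, hsubst⟩
  have htsw : CoxeterBruhatLe cs (cs.simple t * cs.simple s) w :=
    ⟨l, [t, s], hred, hprod, hredts, hpts, hsubts⟩
  have hsw : CoxeterBruhatLe cs (cs.simple s) w :=
    ⟨l, [s], hred, hprod, hreds, by simp [CoxeterSystem.wordProd_cons],
      (List.cons_sublist_cons.mpr (List.nil_sublist _)).trans hsubst⟩
  have htw : CoxeterBruhatLe cs (cs.simple t) w :=
    ⟨l, [t], hred, hprod, hredt, by simp [CoxeterSystem.wordProd_cons],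
      (List.cons_sublist_cons.mpr (List.nil_sublist _)).trans hsubts⟩
  have hlestst : CoxeterBruhatLe cs (cs.simple s) (cs.simple s * cs.simple t) :=
    ⟨[s, t], [s], hredst, hpst, hreds, by simp [CoxeterSystem.wordProd_cons],
      List.cons_sublist_cons.mpr (List.nil_sublist _)⟩
  have hletst : CoxeterBruhatLe cs (cs.simple t) (cs.simple s * cs.simple t) :=
    ⟨[s, t], [t], hredst, hpst, hredt, by simp [CoxeterSystem.wordProd_cons],
      (List.cons_sublist_cons.mpr (List.nil_sublist _)).cons s⟩
  have hlests : CoxeterBruhatLe cs (cs.simple s) (cs.simple t * cs.simple s) :=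
    ⟨[t, s], [s], hredts, hpts, hreds, by simp [CoxeterSystem.wordProd_cons],
      (List.cons_sublist_cons.mpr (List.nil_sublist _)).cons t⟩
  have hletts : CoxeterBruhatLe cs (cs.simple t) (cs.simple t * cs.simple s) :=
    ⟨[t, s], [t], hredts, hpts, hredt, by simp [CoxeterSystem.wordProd_cons],
      List.cons_sublist_cons.mpr (List.nil_sublist _)⟩
  refine ⟨s, t, hnc, hsw, htw, hstw, htsw, ?_⟩
  rintro ⟨z, hzw, hsz, htz, hjoin⟩
  have hst_ne : cs.simple s ≠ cs.simple t := by
    intro h; apply hnc; rw [h]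
  -- z ≤ st and z ≤ ts
  have hz_st : CoxeterBruhatLe cs z (cs.simple s * cs.simple t) :=
    hjoin _ hstw hlestst hletst
  have hz_ts : CoxeterBruhatLe cs z (cs.simple t * cs.simple s) :=
    hjoin _ htsw hlests hletts
  have hlz2 : cs.length z ≤ 2 := hlenst ▸ bruhat_le_length cs hz_st
  rcases Nat.lt_or_ge (cs.length z) 2 with hlt | hge
  · -- length z ≤ 1 : then z = s and z = t, contradiction
    have hzs : cs.simple s = z :=
      eq_of_bruhat_le_of_length cs hsz (by rw [cs.length_simple]; omega)
    have hzt : cs.simple t = z :=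
      eq_of_bruhat_le_of_length cs htz (by rw [cs.length_simple]; omega)
    exact hst_ne (hzs.trans hzt.symm)
  · -- length z = 2 : then z = st and z = ts, contradiction
    have h1 : z = cs.simple s * cs.simple t :=
      eq_of_bruhat_le_of_length cs hz_st (by omega)
    have h2 : z = cs.simple t * cs.simple s :=
      eq_of_bruhat_le_of_length cs hz_ts (by omega)
    exact hnc (h1 ▸ h2)
end

section
/- Let G be a Coxeter group and w ∈ G an element that is a product of pairwise commuting generators s_1, ..., s_k (all distinct). Then the principal order ideal of w in the right weak order is isomorphic, as a poset, to the boolean lattice of subsets of {s_1, ..., s_k} ordered by inclusion. -/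
open List

/-- Right weak order on a Coxeter group: `v ≤wk w` iff some reduced word of `v`
is a prefix of some reduced word of `w`. -/
def CoxeterWeakLe {B W : Type*} [Group W] {M : CoxeterMatrix B}
    (cs : CoxeterSystem M W) (v w : W) : Prop :=
  ∃ lw lv : List B, cs.IsReduced lw ∧ cs.wordProd lw = w ∧
    cs.IsReduced lv ∧ cs.wordProd lv = v ∧ lv <+: lw

namespace WeakPOI

variable {B W : Type*} [Group W] {M : CoxeterMatrix B} (cs : CoxeterSystem M W)

local prefix:100 "s" => cs.simple
local prefix:100 "π" => cs.wordProd
local prefix:100 "ℓ" => cs.length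

noncomputable section Geo

/-- entries of the Coxeter bilinear form -/
noncomputable def kk (M : CoxeterMatrix B) (c d : B) : ℝ := - Real.cos (Real.pi / M c d)

lemma kk_symm (c d : B) : kk M c d = kk M d c := by rw [kk, kk, M.symmetric]

lemma kk_diag (c : B) : kk M c c = 1 := by
  simp [kk, M.diagonal c]

/-- basis vector -/
noncomputable def av (c : B) : B →₀ ℝ := Finsupp.single c 1

/-- linear functional `⟨α_c, ·⟩` -/
noncomputable def bf (M : CoxeterMatrix B) (c : B) : (B →₀ ℝ) →ₗ[ℝ] ℝ :=
  Finsupp.linearCombination ℝ (fun d => kk M c d)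

lemma bf_av (c d : B) : bf M c (av d) = kk M c d := by
  simp [bf, av, Finsupp.linearCombination_single]

/-- the reflection attached to `c` -/
noncomputable def refl (M : CoxeterMatrix B) (c : B) : Module.End ℝ (B →₀ ℝ) :=
  LinearMap.id - (bf M c).smulRight ((2:ℝ) • av c)

lemma refl_apply (c : B) (v : B →₀ ℝ) :
    refl M c v = v - (2 * bf M c v) • av c := by
  simp [refl, LinearMap.sub_apply, LinearMap.smulRight_apply, smul_smul, mul_comm]

lemma bf_refl_apply (c d : B) (v : B →₀ ℝ) :
    bf M d (refl M c v) = bf M d v - 2 * bf M c v * kk M d c := by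
  rw [refl_apply, map_sub, map_smul, bf_av, smul_eq_mul]

lemma refl_fixed {c : B} {v : B →₀ ℝ} (h : bf M c v = 0) : refl M c v = v := by
  rw [refl_apply, h]; simp

lemma refl_invol (c : B) (v : B →₀ ℝ) : refl M c (refl M c v) = v := by
  rw [refl_apply c (refl M c v), bf_refl_apply, kk_diag, refl_apply]
  module

section Plane

variable (M) (c d : B)

/-- a point of the plane spanned by `av c`, `av d` -/
noncomputable def PP (x y : ℝ) : B →₀ ℝ := x • av c + y • av d

lemma bf_PP_c (x y : ℝ) : bf M c (PP c d x y) = x + y * kk M c d := by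
  simp [PP, bf_av, kk_diag]

lemma bf_PP_d (x y : ℝ) : bf M d (PP c d x y) = x * kk M c d + y := by
  simp [PP, bf_av, kk_diag, kk_symm d c]

lemma refl_c_PP (x y : ℝ) :
    refl M c (PP c d x y) = PP c d (-x - 2 * kk M c d * y) y := by
  rw [refl_apply, bf_PP_c, PP, PP]
  module

lemma refl_d_PP (x y : ℝ) :
    refl M d (PP c d x y) = PP c d x (-(2 * kk M c d * x) - y) := by
  rw [refl_apply, bf_PP_d, PP, PP]
  module

lemma g_PP (x y : ℝ) :
    (refl M c * refl M d) (PP c d x y) =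
      PP c d ((4 * kk M c d ^ 2 - 1) * x + 2 * kk M c d * y) (-(2 * kk M c d * x) - y) := by
  rw [Module.End.mul_apply, refl_d_PP, refl_c_PP]
  rw [show -x - 2 * kk M c d * (-(2 * kk M c d * x) - y)
      = (4 * kk M c d ^ 2 - 1) * x + 2 * kk M c d * y by ring]

lemma g_sq_PP (x y : ℝ) :
    (refl M c * refl M d) ((refl M c * refl M d) (PP c d x y)) =
      (4 * kk M c d ^ 2 - 2) • (refl M c * refl M d) (PP c d x y) - PP c d x y := by
  rw [g_PP, g_PP]
  rw [show ∀ (r a b : ℝ), r • PP c d a b = PP c d (r*a) (r*b) by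
    intros; rw [PP, PP, smul_add, smul_smul, smul_smul]]
  rw [show ∀ (a b a' b' : ℝ), PP c d a b - PP c d a' b' = PP c d (a-a') (b-b') by
    intros; rw [PP, PP, PP]; module]
  congr 1 <;> ring

end Plane

/-- Chebyshev-style recursion for an endomorphism satisfying a quadratic relation on `u`. -/
lemma cheb {V : Type*} [AddCommGroup V] [Module ℝ V] (g : Module.End ℝ V) (θ : ℝ) (u : V)
    (H : g (g u) = (2 * Real.cos (2*θ)) • g u - u) :
    ∀ j : ℕ, Real.sin (2*θ) • ((g^(j+1)) u) =
      Real.sin ((j+1 : ℕ) * (2*θ)) • g u - Real.sin ((j : ℕ) * (2*θ)) • u := by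
  intro j
  induction j with
  | zero => simp
  | succ j ih =>
    have h1 : (g^(j+1+1)) u = g ((g^(j+1)) u) := by
      rw [pow_succ', Module.End.mul_apply]
    rw [h1, ← map_smul, ih, map_sub, map_smul, map_smul, H]
    have hs : Real.sin ((j+1+1 : ℕ) * (2*θ))
        = 2 * Real.sin ((j+1 : ℕ) * (2*θ)) * Real.cos (2*θ) - Real.sin ((j : ℕ) * (2*θ)) := by
      push_cast
      rw [show ((j:ℝ)+1+1)*(2*θ) = ((j:ℝ)+1)*(2*θ) + 2*θ by ring,
          show (j:ℝ)*(2*θ) = ((j:ℝ)+1)*(2*θ) - 2*θ by ring,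
          Real.sin_add, Real.sin_sub]
      ring
    rw [hs]
    match_scalars <;> ring

lemma gpow_fixed (c d : B) {v : B →₀ ℝ} (hc : bf M c v = 0) (hd : bf M d v = 0) :
    ∀ n : ℕ, ((refl M c * refl M d)^n) v = v := by
  intro n
  induction n with
  | zero => simp
  | succ n ih =>
    rw [pow_succ, Module.End.mul_apply, Module.End.mul_apply,
        refl_fixed hd, refl_fixed hc, ih]

theorem isLiftable_refl (M : CoxeterMatrix B) : M.IsLiftable (refl M) := by
  intro c d
  rcases eq_or_ne c d with rfl | hcd
  · rw [M.diagonal c, pow_one]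
    apply LinearMap.ext
    intro v
    rw [Module.End.mul_apply, refl_invol, Module.End.one_apply]
  rcases Nat.eq_zero_or_pos (M c d) with h0 | hpos
  · rw [h0, pow_zero]
  have hm1 : M c d ≠ 1 := M.off_diagonal c d hcd
  have hm2 : 2 ≤ M c d := by omega
  set m : ℕ := M c d with hm
  set K : ℝ := kk M c d with hK
  -- key facts about K
  have hKval : K = - Real.cos (Real.pi / m) := rfl
  have hθpos : 0 < Real.pi / m := by
    apply div_pos Real.pi_pos
    exact_mod_cast Nat.pos_of_ne_zero (by omega)
  have hθlt : Real.pi / m ≤ Real.pi / 2 := by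
    apply div_le_div_of_nonneg_left Real.pi_pos.le (by norm_num)
    exact_mod_cast hm2
  have hθltpi : Real.pi / m < Real.pi := by
    apply lt_of_le_of_lt hθlt
    linarith [Real.pi_pos]
  have hsinθ : 0 < Real.sin (Real.pi / m) := Real.sin_pos_of_pos_of_lt_pi hθpos hθltpi
  have hK2 : 1 - K^2 = Real.sin (Real.pi / m) ^ 2 := by
    rw [hKval]
    have := Real.sin_sq_add_cos_sq (Real.pi / m)
    ring_nf
    ring_nf at this
    linarith
  have hD : 1 - K^2 ≠ 0 := by rw [hK2]; positivity
  -- the key plane power identity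
  have hplane : ∀ x y : ℝ, (((refl M c * refl M d))^m) (PP c d x y) = PP c d x y := by
    intro x y
    rcases eq_or_lt_of_le hm2 with h2 | h3
    · -- m = 2
      have hK0 : K = 0 := by
        rw [hKval, ← h2]
        norm_num [Real.cos_pi_div_two]
      rw [← h2, pow_two, Module.End.mul_apply, g_PP, g_PP]
      simp only [← hK, hK0]
      norm_num
    · -- m ≥ 3
      set θ : ℝ := Real.pi / m with hθ
      have hcos2 : 4 * K ^ 2 - 2 = 2 * Real.cos (2 * θ) := by
        rw [hKval]
        have := Real.cos_sq θ
        nlinarith [this]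
      have H := g_sq_PP M c d x y
      rw [← hK, hcos2] at H
      have key := cheb (refl M c * refl M d) θ (PP c d x y) H (m - 1)
      have hm1' : m - 1 + 1 = m := by omega
      rw [hm1'] at key
      have hm0 : (0:ℝ) < m := by exact_mod_cast Nat.pos_of_ne_zero (by omega)
      have hsin2θ : 0 < Real.sin (2 * θ) := by
        apply Real.sin_pos_of_pos_of_lt_pi
        · positivity
        · rw [hθ, show 2 * (Real.pi / m) = (2*Real.pi)/m by ring, div_lt_iff₀ hm0]
          have : (3 : ℝ) ≤ m := by exact_mod_cast h3
          nlinarith [Real.pi_pos]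
      have hmθ : (m : ℝ) * (2 * θ) = 2 * Real.pi := by
        rw [hθ]
        field_simp
      have hsm : Real.sin ((m : ℕ) * (2*θ)) = 0 := by
        push_cast
        rw [hmθ, Real.sin_two_pi]
      have hsm1 : Real.sin ((m - 1 : ℕ) * (2*θ)) = - Real.sin (2*θ) := by
        have : ((m - 1 : ℕ) : ℝ) = (m : ℝ) - 1 := by
          have : 1 ≤ m := by omega
          push_cast [this]
          ring
        rw [this, show ((m:ℝ) - 1) * (2*θ) = (m:ℝ) * (2*θ) - 2*θ by ring, hmθ,
            Real.sin_sub, Real.sin_two_pi, Real.cos_two_pi]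
        ring
      rw [hsm, hsm1] at key
      have key2 : Real.sin (2*θ) • (((refl M c * refl M d))^m) (PP c d x y) =
          Real.sin (2*θ) • PP c d x y := by
        rw [key]; module
      exact smul_right_injective (B →₀ ℝ) (ne_of_gt hsin2θ) key2
  -- decompose an arbitrary vector and conclude
  apply LinearMap.ext
  intro v
  rw [Module.End.one_apply]
  set a : ℝ := bf M c v with ha
  set b : ℝ := bf M d v with hb
  set x : ℝ := (a - K * b) / (1 - K^2) with hx
  set y : ℝ := (b - K * a) / (1 - K^2) with hy
  have hrc : bf M c (v - PP c d x y) = 0 := by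
    rw [map_sub, bf_PP_c, ← hK, ← ha, hx, hy]
    field_simp
    ring
  have hrd : bf M d (v - PP c d x y) = 0 := by
    rw [map_sub, bf_PP_d, ← hK, ← hb, hx, hy]
    field_simp
    ring
  have hv : v = PP c d x y + (v - PP c d x y) := by abel
  rw [hv, map_add, hplane, gpow_fixed c d hrc hrd]

noncomputable def geoRep : W →* Module.End ℝ (B →₀ ℝ) :=
  cs.lift ⟨refl M, isLiftable_refl M⟩

lemma geoRep_simple (c : B) : geoRep cs (s c) = refl M c :=
  CoxeterSystem.lift_apply_simple cs (isLiftable_refl M) c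

theorem simple_injective : Function.Injective cs.simple := by
  intro b b' h
  by_contra hne
  have h2 : refl M b = refl M b' := by
    rw [← geoRep_simple cs, ← geoRep_simple cs, h]
  have h3 := congrArg (fun f : Module.End ℝ (B →₀ ℝ) => (f (av b)) b) h2
  simp only [refl_apply, bf_av, kk_diag] at h3
  rw [Finsupp.sub_apply, Finsupp.sub_apply, Finsupp.smul_apply, Finsupp.smul_apply] at h3
  have hb1 : (av b : B →₀ ℝ) b = 1 := Finsupp.single_eq_same
  have hb2 : (av b' : B →₀ ℝ) b = 0 := Finsupp.single_eq_of_ne' (Ne.symm hne)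
  rw [hb1, hb2] at h3
  norm_num at h3

end Geo
noncomputable section Eta
open scoped Classical

lemma simple_conj_eq_iff (i : B) (y : W) : s i * y * s i = s i ↔ y = s i := by
  constructor
  · intro h
    have h2 : s i * (s i * y * s i) * s i = s i * s i * s i := by rw [h]
    simpa [mul_assoc, cs.simple_mul_simple_cancel_left,
      cs.simple_mul_simple_self] using h2
  · rintro rfl
    simp [mul_assoc, cs.simple_mul_simple_cancel_left, cs.simple_mul_simple_self]

/-- the basic permutation: `(t, ε) ↦ (s i t s i, ε + [t = s i])` -/
noncomputable def etaF (i : B) : W × ZMod 2 → W × ZMod 2 :=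
  fun x => (s i * x.1 * s i, x.2 + if x.1 = s i then 1 else 0)

lemma etaF_invol (i : B) : Function.Involutive (etaF cs i) := by
  intro x
  unfold etaF
  ext
  · show s i * (s i * x.1 * s i) * s i = x.1
    simp [mul_assoc, cs.simple_mul_simple_cancel_left, cs.simple_mul_simple_cancel_right,
      cs.simple_mul_simple_self]
  · show x.2 + (if x.1 = s i then 1 else 0) + (if s i * x.1 * s i = s i then 1 else 0) = x.2
    rw [simple_conj_eq_iff]
    rcases em (x.1 = s i) with h | h <;> simp [h]
    · rw [add_assoc, show ((1 : ZMod 2) + 1) = 0 by decide, add_zero]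

noncomputable def etaP (i : B) : Equiv.Perm (W × ZMod 2) := (etaF_invol cs i).toPerm

lemma etaP_apply (i : B) (x : W × ZMod 2) :
    etaP cs i x = (s i * x.1 * s i, x.2 + if x.1 = s i then 1 else 0) := rfl

/-- the sequence of reflections crossed by iterating `etaP i ∘ etaP j` -/
noncomputable def TT (i j : B) (p : ℕ) : W :=
  ((s i * s j)^(p/2))⁻¹ * (if p % 2 = 0 then s j else s j * s i * s j) * (s i * s j)^(p/2)

lemma TT_add_two (i j : B) (p : ℕ) :
    TT cs i j (p+2) = (s i * s j)⁻¹ * TT cs i j p * (s i * s j) := by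
  unfold TT
  rw [show (p+2)/2 = p/2 + 1 by omega, show (p+2) % 2 = p % 2 by omega, pow_succ]
  group

lemma etaP_mul_pow (i j : B) (n : ℕ) (t : W) (ε : ZMod 2) :
    ((etaP cs i * etaP cs j)^n) (t, ε) =
      ((s i * s j)^n * t * ((s i * s j)^n)⁻¹,
        ε + ∑ p ∈ Finset.range (2*n), (if t = TT cs i j p then 1 else 0)) := by
  induction n generalizing t ε with
  | zero => simp
  | succ n ih =>
    have hg : (etaP cs i * etaP cs j) (t, ε) =
        ((s i * s j) * t * (s i * s j)⁻¹,
          ε + ((if t = TT cs i j 0 then 1 else 0) + (if t = TT cs i j 1 then 1 else 0))) := by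
      rw [Equiv.Perm.mul_apply, etaP_apply, etaP_apply]
      ext
      · show s i * (s j * t * s j) * s i = (s i * s j) * t * (s i * s j)⁻¹
        rw [mul_inv_rev, cs.inv_simple, cs.inv_simple]
        group
      · show ε + (if t = s j then 1 else 0) + (if s j * t * s j = s i then 1 else 0) = _
        have h1 : TT cs i j 0 = s j := by simp [TT]
        have h2 : TT cs i j 1 = s j * s i * s j := by simp [TT]
        have h3 : (s j * t * s j = s i) ↔ (t = s j * s i * s j) := by
          constructor
          · intro h
            rw [← h]
            simp [mul_assoc, cs.simple_mul_simple_cancel_left, cs.simple_mul_simple_cancel_right,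
              cs.simple_mul_simple_self]
          · rintro rfl
            simp [mul_assoc, cs.simple_mul_simple_cancel_left, cs.simple_mul_simple_self]
        rw [h1, h2, h3, add_assoc]
    rw [pow_succ, Equiv.Perm.mul_apply, hg, ih]
    ext
    · show (s i * s j)^n * ((s i * s j) * t * (s i * s j)⁻¹) * ((s i * s j)^n)⁻¹
        = (s i * s j)^(n+1) * t * ((s i * s j)^(n+1))⁻¹
      generalize (s i * s j : W) = A
      group
    · show _ + ∑ p ∈ Finset.range (2*n),
          (if (s i * s j) * t * (s i * s j)⁻¹ = TT cs i j p then 1 else 0) = _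
      have hcond : ∀ p, ((s i * s j) * t * (s i * s j)⁻¹ = TT cs i j p) ↔ (t = TT cs i j (p+2)) := by
        intro p
        rw [TT_add_two]
        constructor
        · intro h; rw [← h]; group
        · intro h; rw [h]; group
      simp only [hcond]
      rw [show 2*(n+1) = 2*n + 1 + 1 by ring, Finset.sum_range_succ', Finset.sum_range_succ']
      simp only [show ∀ p, p + 1 + 1 = p + 2 from fun p => rfl]
      ring

lemma TT_periodic (i j : B) : ∀ p : ℕ, TT cs i j (p + M i j) = TT cs i j p := by
  set m : ℕ := M i j with hm
  set a : W := s i * s j with haa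
  have ha : a ^ m = 1 := cs.simple_mul_simple_pow i j
  have hja : s j * a * s j = a⁻¹ := by
    rw [haa, mul_inv_rev, cs.inv_simple, cs.inv_simple]
    simp [mul_assoc, cs.simple_mul_simple_cancel_left, cs.simple_mul_simple_self]
  have hia : s i * a * s i = a⁻¹ := by
    rw [haa, mul_inv_rev, cs.inv_simple, cs.inv_simple]
    simp [← mul_assoc, cs.simple_mul_simple_cancel_right, cs.simple_mul_simple_self]
  have hjk : ∀ k : ℕ, s j * a ^ k * s j = (a ^ k)⁻¹ := by
    intro k
    induction k with
    | zero => simp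
    | succ k ih =>
      have : s j * a ^ (k+1) * s j = (s j * a ^ k * s j) * (s j * a * s j) := by
        rw [pow_succ]
        simp [haa, mul_assoc, cs.simple_mul_simple_cancel_left]
      rw [this, ih, hja, ← mul_inv_rev, ← pow_succ']
  have hik : ∀ k : ℕ, s i * a ^ k * s i = (a ^ k)⁻¹ := by
    intro k
    induction k with
    | zero => simp
    | succ k ih =>
      have : s i * a ^ (k+1) * s i = (s i * a ^ k * s i) * (s i * a * s i) := by
        rw [pow_succ]
        simp [haa, mul_assoc, cs.simple_mul_simple_cancel_left]
      rw [this, ih, hia, ← mul_inv_rev, ← pow_succ']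
  have hj1 : ∀ k : ℕ, s j * a ^ k = (a ^ k)⁻¹ * s j := by
    intro k
    calc s j * a ^ k = (s j * a ^ k * s j) * s j := by
          simp [mul_assoc, cs.simple_mul_simple_self]
    _ = (a ^ k)⁻¹ * s j := by rw [hjk]
  have hi1 : ∀ k : ℕ, s i * a ^ k = (a ^ k)⁻¹ * s i := by
    intro k
    calc s i * a ^ k = (s i * a ^ k * s i) * s i := by
          simp [mul_assoc, cs.simple_mul_simple_self]
    _ = (a ^ k)⁻¹ * s i := by rw [hik]
  have hj2 : ∀ k : ℕ, a ^ k * s j = s j * (a ^ k)⁻¹ := by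
    intro k
    have h2 := congrArg (fun z => a ^ k * z * (a ^ k)⁻¹) (hj1 k)
    simpa [mul_assoc] using h2
  have hi2 : ∀ k : ℕ, a ^ k * s i = s i * (a ^ k)⁻¹ := by
    intro k
    have h2 := congrArg (fun z => a ^ k * z * (a ^ k)⁻¹) (hi1 k)
    simpa [mul_assoc] using h2
  have hswap : ∀ k k' : ℕ, (a ^ k)⁻¹ * (a ^ k')⁻¹ = (a ^ k')⁻¹ * (a ^ k)⁻¹ := by
    intro k k'
    rw [← mul_inv_rev, ← mul_inv_rev, pow_mul_comm]
  intro p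
  rcases Nat.even_or_odd m with ⟨h, hh⟩ | ⟨h, hh⟩
  · -- m = h + h even
    have hdiv : (p + m)/2 = p/2 + h := by omega
    have hmod : (p + m) % 2 = p % 2 := by omega
    have hself : (a ^ h)⁻¹ = a ^ h := by
      rw [inv_eq_iff_mul_eq_one, ← pow_add, show h + h = m by omega, ha]
    unfold TT
    rw [hdiv, hmod, pow_add]
    set u : W := if p % 2 = 0 then s j else s j * s i * s j with hu
    have hcu : (a ^ h)⁻¹ * u * a ^ h = u := by
      rcases em (p % 2 = 0) with he | he
      · rw [hu, if_pos he, hself, hj2]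
        simp
      · rw [hu, if_neg he, hself]
        calc a ^ h * (s j * s i * s j) * a ^ h
              = (a ^ h * s j) * s i * (s j * a ^ h) := by group
        _ = (s j * (a ^ h)⁻¹) * s i * ((a ^ h)⁻¹ * s j) := by rw [hj2, hj1]
        _ = s j * ((a ^ h)⁻¹ * s i * (a ^ h)⁻¹) * s j := by group
        _ = s j * ((a ^ h)⁻¹ * (s i * (a ^ h)⁻¹)) * s j := by rw [mul_assoc ((a^h)⁻¹)]
        _ = s j * ((a ^ h)⁻¹ * (a ^ h * s i)) * s j := by rw [← hi2]
        _ = s j * s i * s j := by group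
    calc (a ^ (p/2) * a ^ h)⁻¹ * u * (a ^ (p/2) * a ^ h)
          = (a ^ (p/2))⁻¹ * ((a ^ h)⁻¹ * u * a ^ h) * a ^ (p/2) := by
            rw [mul_inv_rev, hswap]
            group
    _ = (a ^ (p/2))⁻¹ * u * a ^ (p/2) := by rw [hcu]
  · -- m = 2h+1 odd
    have hinv : a⁻¹ = s j * s i := by
      rw [haa, mul_inv_rev, cs.inv_simple, cs.inv_simple]
    rcases Nat.even_or_odd p with ⟨q, hq⟩ | ⟨q, hq⟩
    · -- p even
      have hdiv : (p + m)/2 = p/2 + h := by omega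
      have hmod : (p + m) % 2 = 1 := by omega
      have hmod' : p % 2 = 0 := by omega
      unfold TT
      rw [hdiv, hmod, hmod', pow_add, if_neg one_ne_zero, if_pos rfl]
      have key : (a ^ h)⁻¹ * (s j * s i * s j) * a ^ h = s j := by
        calc (a ^ h)⁻¹ * (s j * s i * s j) * a ^ h
              = (a ^ h)⁻¹ * (s j * s i) * (s j * a ^ h) := by group
        _ = (a ^ h)⁻¹ * (s j * s i) * ((a ^ h)⁻¹ * s j) := by rw [hj1]
        _ = (a ^ h)⁻¹ * s j * (s i * (a ^ h)⁻¹) * s j := by group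
        _ = (a ^ h)⁻¹ * s j * (a ^ h * s i) * s j := by rw [← hi2]
        _ = (a ^ h)⁻¹ * (s j * a ^ h) * (s i * s j) := by group
        _ = (a ^ h)⁻¹ * ((a ^ h)⁻¹ * s j) * (s i * s j) := by rw [hj1]
        _ = ((a ^ h)⁻¹ * (a ^ h)⁻¹) * (s j * (s i * s j)) := by group
        _ = a * (s j * (s i * s j)) := by
              rw [← mul_inv_rev, ← pow_add,
                show (a ^ (h+h))⁻¹ = a by
                  rw [inv_eq_iff_mul_eq_one, ← pow_succ, show h+h+1 = m by omega, ha]]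
        _ = s j := by
              rw [haa]
              simp [mul_assoc, cs.simple_mul_simple_cancel_left, cs.simple_mul_simple_self]
      calc (a ^ (p/2) * a ^ h)⁻¹ * (s j * s i * s j) * (a ^ (p/2) * a ^ h)
            = (a ^ (p/2))⁻¹ * ((a ^ h)⁻¹ * (s j * s i * s j) * a ^ h) * a ^ (p/2) := by
              rw [mul_inv_rev, hswap]
              group
      _ = (a ^ (p/2))⁻¹ * s j * a ^ (p/2) := by rw [key]
    · -- p odd
      have hdiv : (p + m)/2 = p/2 + (h + 1) := by omega
      have hmod : (p + m) % 2 = 0 := by omega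
      have hmod' : p % 2 = 1 := by omega
      unfold TT
      rw [hdiv, hmod, hmod', pow_add, if_pos rfl, if_neg one_ne_zero]
      have key : (a ^ (h+1))⁻¹ * s j * a ^ (h+1) = s j * s i * s j := by
        calc (a ^ (h+1))⁻¹ * s j * a ^ (h+1)
              = (a ^ (h+1))⁻¹ * (s j * a ^ (h+1)) := by group
        _ = (a ^ (h+1))⁻¹ * ((a ^ (h+1))⁻¹ * s j) := by rw [hj1]
        _ = ((a ^ (h+1)) * (a ^ (h+1)))⁻¹ * s j := by group
        _ = a⁻¹ * s j := by
              rw [← pow_add, show (h + 1 + (h + 1)) = m + 1 by omega, pow_succ, ha, one_mul]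
        _ = s j * s i * s j := by rw [hinv, mul_assoc]
      calc (a ^ (p/2) * a ^ (h+1))⁻¹ * s j * (a ^ (p/2) * a ^ (h+1))
            = (a ^ (p/2))⁻¹ * ((a ^ (h+1))⁻¹ * s j * a ^ (h+1)) * a ^ (p/2) := by
              rw [mul_inv_rev, hswap]
              group
      _ = (a ^ (p/2))⁻¹ * (s j * s i * s j) * a ^ (p/2) := by rw [key]

theorem eta_liftable : M.IsLiftable (etaP cs) := by
  intro i j
  apply Equiv.ext
  rintro ⟨t, ε⟩
  rw [etaP_mul_pow, cs.simple_mul_simple_pow i j]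
  have hsum : ∑ p ∈ Finset.range (2 * M i j), (if t = TT cs i j p then (1:ZMod 2) else 0) = 0 := by
    rw [two_mul, Finset.sum_range_add]
    have he : ∀ p, (if t = TT cs i j (M i j + p) then (1:ZMod 2) else 0)
        = (if t = TT cs i j p then 1 else 0) := fun p => by rw [Nat.add_comm, TT_periodic]
    rw [Finset.sum_congr rfl (fun p _ => he p), ← Finset.sum_add_distrib]
    apply Finset.sum_eq_zero
    intro p _
    rcases em (t = TT cs i j p) with h | h <;> simp [h]
    decide
  rw [hsum, add_zero]
  simp

/-- the homomorphism counting reflection crossings mod 2 -/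
noncomputable def theta : W →* Equiv.Perm (W × ZMod 2) := cs.lift ⟨etaP cs, eta_liftable cs⟩

lemma theta_simple (i : B) : theta cs (s i) = etaP cs i :=
  cs.lift_apply_simple (eta_liftable cs) i

lemma theta_wordProd (ω : List B) (t : W) (ε : ZMod 2) :
    theta cs (π ω) (t, ε) = (π ω * t * (π ω)⁻¹, ε + ((cs.rightInvSeq ω).count t : ZMod 2)) := by
  induction ω generalizing t ε with
  | nil => simp [theta]
  | cons i ω ih =>
    rw [cs.wordProd_cons, map_mul, Equiv.Perm.mul_apply, ih, theta_simple, etaP_apply]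
    have hris : cs.rightInvSeq (i :: ω) = (π ω)⁻¹ * s i * π ω :: cs.rightInvSeq ω := rfl
    ext
    · show s i * (π ω * t * (π ω)⁻¹) * s i = π (i :: ω) * t * (π (i :: ω))⁻¹
      rw [cs.wordProd_cons, mul_inv_rev, cs.inv_simple]
      group
    · show ε + ((cs.rightInvSeq ω).count t : ZMod 2)
          + (if π ω * t * (π ω)⁻¹ = s i then 1 else 0) = _
      rw [hris]
      have hcond : (π ω * t * (π ω)⁻¹ = s i) ↔ (t = (π ω)⁻¹ * s i * π ω) := by
        constructor
        · intro h; rw [← h]; group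
        · intro h; rw [h]; group
      rw [List.count_cons]
      push_cast
      rw [hcond]
      rcases em (t = (π ω)⁻¹ * s i * π ω) with h | h
      · simp [h]
        ring
      · simp [h, Ne.symm h]

/-- number of times (mod 2) that the reflection `t` is crossed by `w` -/
noncomputable def nn (w t : W) : ZMod 2 := ((theta cs w) (t, 0)).2

lemma nn_wordProd (ω : List B) (t : W) :
    nn cs (π ω) t = ((cs.rightInvSeq ω).count t : ZMod 2) := by
  unfold nn
  rw [theta_wordProd]
  simp

lemma theta_apply_pair (w t : W) (ε : ZMod 2) :
    theta cs w (t, ε) = (w * t * w⁻¹, ε + nn cs w t) := by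
  obtain ⟨ω, rfl⟩ := cs.wordProd_surjective w
  rw [theta_wordProd, nn_wordProd]

lemma nn_mul (u v t : W) : nn cs (u * v) t = nn cs v t + nn cs u (v * t * v⁻¹) := by
  unfold nn
  rw [map_mul, Equiv.Perm.mul_apply, theta_apply_pair cs v t 0, zero_add, theta_apply_pair]
  rfl

lemma nn_one_elt (t : W) : nn cs 1 t = 0 := by
  unfold nn
  rw [map_one]
  rfl

lemma nn_inv (v t : W) : nn cs v⁻¹ t = nn cs v (v⁻¹ * t * v) := by
  have h := nn_mul cs v v⁻¹ t
  rw [mul_inv_cancel, nn_one_elt, inv_inv] at h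
  have : ∀ x y : ZMod 2, 0 = x + y → x = y := by decide
  exact this _ _ h

lemma nn_reflection {t : W} (ht : cs.IsReflection t) : nn cs t t = 1 := by
  obtain ⟨v, i, rfl⟩ := ht
  have h1 : nn cs (s i) (s i) = 1 := by
    have h := nn_wordProd cs [i] (s i)
    rw [cs.wordProd_singleton, cs.rightInvSeq_singleton] at h
    simpa using h
  have hv : v⁻¹ * (v * s i * v⁻¹) * v = s i := by group
  have h2 : nn cs (v * s i * v⁻¹) (v * s i * v⁻¹)
      = nn cs v⁻¹ (v * s i * v⁻¹) + nn cs (v * s i) (s i) := by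
    rw [nn_mul cs (v * s i) v⁻¹, inv_inv, hv]
  have h3 : nn cs (v * s i) (s i) = 1 + nn cs v (s i) := by
    rw [nn_mul cs v (s i) (s i), h1, show s i * s i * (s i)⁻¹ = s i by group]
  have h4 : nn cs v⁻¹ (v * s i * v⁻¹) = nn cs v (s i) := by
    rw [nn_inv, hv]
  rw [h2, h3, h4]
  have : ∀ x : ZMod 2, x + (1 + x) = 1 := by decide
  exact this _

lemma lt_of_nn_one {w t : W} (ht : cs.IsReflection t) (h : nn cs w t = 1) :
    ℓ (w * t) < ℓ w := by
  obtain ⟨ω, hred, rfl⟩ := cs.exists_reduced_word' w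
  rw [nn_wordProd] at h
  have hnd := hred.nodup_rightInvSeq
  have hle : (cs.rightInvSeq ω).count t ≤ 1 := List.nodup_iff_count_le_one.mp hnd t
  have hone : (cs.rightInvSeq ω).count t = 1 := by
    rcases Nat.lt_or_ge ((cs.rightInvSeq ω).count t) 1 with h0 | h0
    · exfalso
      rw [Nat.lt_one_iff.mp h0] at h
      exact absurd h (by decide)
    · omega
  have hmem : t ∈ cs.rightInvSeq ω := by
    rw [← List.count_pos_iff]
    omega
  exact (cs.isRightInversion_of_mem_rightInvSeq hred hmem).2

lemma nn_one_of_lt {w t : W} (ht : cs.IsReflection t) (h : ℓ (w * t) < ℓ w) :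
    nn cs w t = 1 := by
  by_contra h0
  have h0' : nn cs w t = 0 := by
    have : ∀ x : ZMod 2, x ≠ 1 → x = 0 := by decide
    exact this _ h0
  have h2 : nn cs (w * t) t = 1 := by
    rw [nn_mul, show t * t * t⁻¹ = t by group, nn_reflection cs ht, h0', add_zero]
  have h3 := lt_of_nn_one cs ht h2
  rw [mul_assoc, ht.mul_self, mul_one] at h3
  omega

lemma mem_rightInvSeq_of_lt {ω : List B} {t : W} (hred : cs.IsReduced ω)
    (ht : cs.IsReflection t) (h : ℓ (π ω * t) < ℓ (π ω)) : t ∈ cs.rightInvSeq ω := by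
  have h1 := nn_one_of_lt cs ht h
  rw [nn_wordProd] at h1
  by_contra hmem
  rw [← List.count_eq_zero] at hmem
  rw [hmem] at h1
  exact absurd h1 (by decide)

/-- left-handed strong exchange: a left inversion lies in the left inversion sequence
of any reduced word -/
lemma mem_leftInvSeq_of_lt {ω : List B} {t : W} (hred : cs.IsReduced ω)
    (ht : cs.IsReflection t) (h : ℓ (t * π ω) < ℓ (π ω)) : t ∈ cs.leftInvSeq ω := by
  have hred' : cs.IsReduced ω.reverse := (cs.isReduced_reverse_iff ω).mpr hred
  have hlen : ℓ (π ω.reverse * t) = ℓ (t * π ω) := by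
    rw [cs.wordProd_reverse, ← cs.length_inv, mul_inv_rev, inv_inv, ht.inv]
  have hlen2 : ℓ (π ω.reverse) = ℓ (π ω) := by
    rw [cs.wordProd_reverse, cs.length_inv]
  have hmem := mem_rightInvSeq_of_lt cs hred' ht (by omega : ℓ (π ω.reverse * t) < ℓ (π ω.reverse))
  rw [cs.rightInvSeq_reverse, List.mem_reverse] at hmem
  exact hmem

end Eta


section Comb
open scoped Classical

variable (l : List B)

local notation "HND" => l.Nodup

/-- the word consisting of the letters of `l` at positions in `T` -/
noncomputable def sub (T : Finset (Fin l.length)) : List B :=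
  ((List.finRange l.length).filter (fun i => decide (i ∈ T))).map l.get

omit [Group W] in
lemma mem_sub {T : Finset (Fin l.length)} {b : B} :
    b ∈ sub l T ↔ ∃ i ∈ T, l.get i = b := by
  simp [sub, List.mem_filter, List.mem_finRange]

omit [Group W] in
lemma sub_subset {T : Finset (Fin l.length)} {b : B} (h : b ∈ sub l T) : b ∈ l := by
  rw [mem_sub] at h
  obtain ⟨i, _, rfl⟩ := h
  exact l.get_mem i

omit [Group W] in
lemma sub_nodup (hnd : l.Nodup) (T : Finset (Fin l.length)) : (sub l T).Nodup := by
  apply List.Nodup.map (List.nodup_iff_injective_get.mp hnd)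
  exact (List.nodup_finRange _).filter _

omit [Group W] in
lemma sub_univ : sub l (Finset.univ : Finset (Fin l.length)) = l := by
  unfold sub
  rw [List.filter_eq_self.mpr (by simp), List.map_get_finRange]

omit [Group W] in
lemma sub_perm_cons (hnd : l.Nodup) {T : Finset (Fin l.length)} {i : Fin l.length} (hi : i ∈ T) :
    sub l T ~ l.get i :: sub l (T.erase i) := by
  have hinj := List.nodup_iff_injective_get.mp hnd
  apply (List.perm_ext_iff_of_nodup (sub_nodup l hnd T) ?_).mpr
  · intro b
    rw [mem_sub, List.mem_cons, mem_sub]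
    constructor
    · rintro ⟨j, hj, rfl⟩
      rcases eq_or_ne j i with rfl | hne
      · exact Or.inl rfl
      · exact Or.inr ⟨j, Finset.mem_erase.mpr ⟨hne, hj⟩, rfl⟩
    · rintro (rfl | ⟨j, hj, rfl⟩)
      · exact ⟨i, hi, rfl⟩
      · exact ⟨j, (Finset.mem_erase.mp hj).2, rfl⟩
  · apply List.Nodup.cons _ (sub_nodup l hnd _)
    rw [mem_sub]
    rintro ⟨j, hj, hgj⟩
    obtain rfl := hinj hgj
    exact (Finset.mem_erase.mp hj).1 rfl

lemma prod_perm (hcomm : ∀ i ∈ l, ∀ j ∈ l, cs.simple i * cs.simple j = cs.simple j * cs.simple i) {m₁ m₂ : List B} (h : m₁ ~ m₂) (hm : ∀ b ∈ m₁, b ∈ l) :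
    π m₁ = π m₂ := by
  apply (h.map cs.simple).prod_eq'
  rw [List.pairwise_map]
  exact List.pairwise_of_forall_mem_list
    (fun a ha b hb => (commute_iff_eq _ _).mpr (hcomm a (hm a ha) b (hm b hb)))

lemma wordProd_sub_insert (hnd : l.Nodup) (hcomm : ∀ i ∈ l, ∀ j ∈ l, cs.simple i * cs.simple j = cs.simple j * cs.simple i) {T : Finset (Fin l.length)} {i : Fin l.length} (hi : i ∈ T) :
    π (sub l T) = s (l.get i) * π (sub l (T.erase i)) := by
  rw [prod_perm cs l hcomm (sub_perm_cons l hnd hi) (fun b hb => sub_subset l hb),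
    cs.wordProd_cons]

lemma lis_commuting (hcomm : ∀ i ∈ l, ∀ j ∈ l, cs.simple i * cs.simple j = cs.simple j * cs.simple i) : ∀ m : List B, (∀ b ∈ m, b ∈ l) → cs.leftInvSeq m = m.map cs.simple := by
  intro m
  induction m with
  | nil => simp
  | cons c m ih =>
    intro hm
    have hlis : cs.leftInvSeq (c :: m) =
        s c :: (cs.leftInvSeq m).map (MulAut.conj (s c)) := rfl
    rw [hlis, ih (fun b hb => hm b (List.mem_cons_of_mem c hb)), List.map_map, List.map_cons]
    congr 1
    apply List.map_congr_left
    intro b hb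
    show s c * s b * (s c)⁻¹ = s b
    rw [cs.inv_simple, hcomm c (hm c (List.mem_cons_self)) b (hm b (List.mem_cons_of_mem c hb)),
      mul_assoc, cs.simple_mul_simple_self, mul_one]

lemma isReduced_sub (hnd : l.Nodup) (hcomm : ∀ i ∈ l, ∀ j ∈ l, cs.simple i * cs.simple j = cs.simple j * cs.simple i) : ∀ (n : ℕ) (T : Finset (Fin l.length)), (sub l T).length = n →
    cs.IsReduced (sub l T) := by
  intro n
  induction n with
  | zero =>
    intro T hT
    rw [List.length_eq_zero_iff] at hT
    rw [CoxeterSystem.IsReduced, hT]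
    simp
  | succ n ih =>
    intro T hT
    have hne : sub l T ≠ [] := by
      intro h
      rw [h] at hT
      simp at hT
    obtain ⟨b, hb⟩ := List.exists_mem_of_ne_nil _ hne
    obtain ⟨i, hi, rfl⟩ := (mem_sub l).mp hb
    have hperm := sub_perm_cons l hnd hi
    have hlen : (sub l (T.erase i)).length = n := by
      have := hperm.length_eq
      rw [hT] at this
      simpa using this.symm
    have hred' := ih (T.erase i) hlen
    have heq := wordProd_sub_insert cs l hnd hcomm hi
    rw [CoxeterSystem.IsReduced, hT, heq]
    rcases cs.length_simple_mul (π (sub l (T.erase i))) (l.get i) with h | h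
    · rw [h, hred', hlen]
    · exfalso
      have hlt : ℓ (s (l.get i) * π (sub l (T.erase i))) < ℓ (π (sub l (T.erase i))) := by
        omega
      have hmem := mem_leftInvSeq_of_lt cs hred' (cs.isReflection_simple (l.get i)) hlt
      rw [lis_commuting cs l hcomm _ (fun b hb => sub_subset l hb), List.mem_map] at hmem
      obtain ⟨b', hb', hsb⟩ := hmem
      obtain rfl := simple_injective cs hsb
      obtain ⟨j, hj, hgj⟩ := (mem_sub l).mp hb'
      obtain rfl := List.nodup_iff_injective_get.mp hnd hgj
      exact (Finset.mem_erase.mp hj).1 rfl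

lemma perm_sub_of_reduced (hnd : l.Nodup) (hcomm : ∀ i ∈ l, ∀ j ∈ l, cs.simple i * cs.simple j = cs.simple j * cs.simple i) : ∀ (m : List B) (T : Finset (Fin l.length)), cs.IsReduced m →
    π m = π (sub l T) → m ~ sub l T := by
  intro m
  induction m with
  | nil =>
    intro T _ hprod
    have h0 : ℓ (π (sub l T)) = 0 := by
      rw [← hprod]
      simp
    have := isReduced_sub cs l hnd hcomm (sub l T).length T rfl
    rw [CoxeterSystem.IsReduced] at this
    rw [this] at h0
    rw [List.length_eq_zero_iff] at h0
    rw [h0]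
  | cons b m ih =>
    intro T hred hprod
    have hredm : cs.IsReduced m := by
      rw [CoxeterSystem.IsReduced]
      have h1 : ℓ (π m) ≤ m.length := cs.length_wordProd_le m
      have h2 : ℓ (π (b :: m)) = m.length + 1 := by
        rw [hred]
        simp
      rcases cs.length_simple_mul (π m) b with h | h
      · rw [cs.wordProd_cons] at h2
        omega
      · rw [cs.wordProd_cons] at h2
        omega
    have hredT := isReduced_sub cs l hnd hcomm (sub l T).length T rfl
    have hlt : ℓ (s b * π (sub l T)) < ℓ (π (sub l T)) := by
      have h1 : s b * π (sub l T) = π m := by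
        rw [← hprod, cs.wordProd_cons, ← mul_assoc, cs.simple_mul_simple_self, one_mul]
      have h2 : ℓ (π (b :: m)) = m.length + 1 := by
        rw [hred]
        simp
      rw [h1, hredm, ← hprod, h2]
      omega
    have hmem := mem_leftInvSeq_of_lt cs hredT (cs.isReflection_simple b) hlt
    rw [lis_commuting cs l hcomm _ (fun x hx => sub_subset l hx), List.mem_map] at hmem
    obtain ⟨b', hb', hsb⟩ := hmem
    obtain rfl := simple_injective cs hsb
    obtain ⟨i, hi, rfl⟩ := (mem_sub l).mp hb'
    have hm' : π m = π (sub l (T.erase i)) := by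
      have h1 : s (l.get i) * π (sub l T) = π m := by
        rw [← hprod, cs.wordProd_cons, ← mul_assoc, cs.simple_mul_simple_self, one_mul]
      rw [← h1, wordProd_sub_insert cs l hnd hcomm hi, ← mul_assoc,
        cs.simple_mul_simple_self, one_mul]
    have hperm := ih (T.erase i) hredm hm'
    exact (hperm.cons (l.get i)).trans (sub_perm_cons l hnd hi).symm

lemma weakle_sub_of_subset (hnd : l.Nodup) (hcomm : ∀ i ∈ l, ∀ j ∈ l, cs.simple i * cs.simple j = cs.simple j * cs.simple i) {T U : Finset (Fin l.length)} (hTU : T ⊆ U) :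
    CoxeterWeakLe cs (π (sub l T)) (π (sub l U)) := by
  have hdisj : List.Disjoint (sub l T) (sub l (U \ T)) := by
    intro b hbT hbU
    obtain ⟨i, hi, rfl⟩ := (mem_sub l).mp hbT
    obtain ⟨j, hj, hgj⟩ := (mem_sub l).mp hbU
    obtain rfl := List.nodup_iff_injective_get.mp hnd hgj
    exact (Finset.mem_sdiff.mp hj).2 hi
  have hnodup : (sub l T ++ sub l (U \ T)).Nodup :=
    List.Nodup.append (sub_nodup l hnd T) (sub_nodup l hnd _) hdisj
  have hperm : sub l U ~ sub l T ++ sub l (U \ T) := by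
    apply (List.perm_ext_iff_of_nodup (sub_nodup l hnd U) hnodup).mpr
    intro b
    rw [List.mem_append, mem_sub, mem_sub, mem_sub]
    constructor
    · rintro ⟨i, hi, rfl⟩
      rcases em (i ∈ T) with h | h
      · exact Or.inl ⟨i, h, rfl⟩
      · exact Or.inr ⟨i, Finset.mem_sdiff.mpr ⟨hi, h⟩, rfl⟩
    · rintro (⟨i, hi, rfl⟩ | ⟨i, hi, rfl⟩)
      · exact ⟨i, hTU hi, rfl⟩
      · exact ⟨i, (Finset.mem_sdiff.mp hi).1, rfl⟩
  have hprod : π (sub l T ++ sub l (U \ T)) = π (sub l U) :=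
    (prod_perm cs l hcomm hperm (fun b hb => sub_subset l hb)).symm
  refine ⟨sub l T ++ sub l (U \ T), sub l T, ?_, hprod, ?_, rfl, List.prefix_append _ _⟩
  · rw [CoxeterSystem.IsReduced, hprod,
      isReduced_sub cs l hnd hcomm (sub l U).length U rfl, hperm.length_eq]
  · exact isReduced_sub cs l hnd hcomm (sub l T).length T rfl

lemma subset_of_weakle (hnd : l.Nodup) (hcomm : ∀ i ∈ l, ∀ j ∈ l, cs.simple i * cs.simple j = cs.simple j * cs.simple i) {T U : Finset (Fin l.length)}
    (h : CoxeterWeakLe cs (π (sub l T)) (π (sub l U))) : T ⊆ U := by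
  obtain ⟨lw, lv, hrw, hpw, hrv, hpv, hpre⟩ := h
  have hpermw : lw ~ sub l U := perm_sub_of_reduced cs l hnd hcomm lw U hrw hpw
  have hpermv : lv ~ sub l T := perm_sub_of_reduced cs l hnd hcomm lv T hrv hpv
  intro i hi
  have h1 : l.get i ∈ lv := hpermv.mem_iff.mpr ((mem_sub l).mpr ⟨i, hi, rfl⟩)
  have h2 : l.get i ∈ lw := hpre.subset h1
  have h3 : l.get i ∈ sub l U := hpermw.mem_iff.mp h2
  obtain ⟨j, hj, hgj⟩ := (mem_sub l).mp h3
  obtain rfl := List.nodup_iff_injective_get.mp hnd hgj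
  exact hj

lemma exists_sub_of_weakle (hnd : l.Nodup) (hcomm : ∀ i ∈ l, ∀ j ∈ l, cs.simple i * cs.simple j = cs.simple j * cs.simple i) {v : W} (h : CoxeterWeakLe cs v (π l)) :
    ∃ T : Finset (Fin l.length), v = π (sub l T) := by
  obtain ⟨lw, lv, hrw, hpw, hrv, hpv, hpre⟩ := h
  have hpw' : π lw = π (sub l Finset.univ) := by rw [sub_univ l, hpw]
  have hpermw : lw ~ l := by
    have := perm_sub_of_reduced cs l hnd hcomm lw Finset.univ hrw hpw'
    rwa [sub_univ l] at this
  have hndw : lw.Nodup := hpermw.nodup_iff.mpr hnd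
  have hndv : lv.Nodup := hpre.sublist.nodup hndw
  have hsubv : ∀ b ∈ lv, b ∈ l := fun b hb => hpermw.subset (hpre.subset hb)
  refine ⟨Finset.univ.filter (fun i => l.get i ∈ lv), ?_⟩
  have hperm : lv ~ sub l (Finset.univ.filter (fun i => l.get i ∈ lv)) := by
    apply (List.perm_ext_iff_of_nodup hndv (sub_nodup l hnd _)).mpr
    intro b
    rw [mem_sub]
    constructor
    · intro hb
      obtain ⟨i, hgi⟩ := List.mem_iff_get.mp (hsubv b hb)
      exact ⟨i, Finset.mem_filter.mpr ⟨Finset.mem_univ i, by rw [hgi]; exact hb⟩, hgi⟩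
    · rintro ⟨i, hi, rfl⟩
      exact (Finset.mem_filter.mp hi).2
  rw [← hpv]
  exact prod_perm cs l hcomm hperm hsubv

end Comb

end WeakPOI

/-- If `w` is a product of pairwise commuting distinct generators `s_1, …, s_k`,
then the principal order ideal of `w` in the right weak order is order-isomorphic
to the boolean lattice of subsets of `{s_1, …, s_k}` ordered by inclusion. -/
theorem weak_poi_boolean_of_commuting_generators {B W : Type*} [Group W]
    {M : CoxeterMatrix B} (cs : CoxeterSystem M W) (l : List B) (hnd : l.Nodup)
    (hcomm : ∀ i ∈ l, ∀ j ∈ l, cs.simple i * cs.simple j = cs.simple j * cs.simple i)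
    (w : W) (hw : w = cs.wordProd l) :
    ∃ e : {v : W // CoxeterWeakLe cs v w} ≃ Finset (Fin l.length),
      ∀ a b : {v : W // CoxeterWeakLe cs v w},
        CoxeterWeakLe cs a.1 b.1 ↔ e a ⊆ e b := by
  subst hw
  have key_le : ∀ T U : Finset (Fin l.length), T ⊆ U →
      CoxeterWeakLe cs (cs.wordProd (WeakPOI.sub l T)) (cs.wordProd (WeakPOI.sub l U)) :=
    fun T U h => WeakPOI.weakle_sub_of_subset cs l hnd hcomm h
  have key_ge : ∀ T U : Finset (Fin l.length),
      CoxeterWeakLe cs (cs.wordProd (WeakPOI.sub l T)) (cs.wordProd (WeakPOI.sub l U)) →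
      T ⊆ U := fun T U h => WeakPOI.subset_of_weakle cs l hnd hcomm h
  have hwle : ∀ T : Finset (Fin l.length),
      CoxeterWeakLe cs (cs.wordProd (WeakPOI.sub l T)) (cs.wordProd l) := by
    intro T
    have := key_le T Finset.univ (Finset.subset_univ T)
    rwa [WeakPOI.sub_univ l] at this
  set Φ : Finset (Fin l.length) → {v : W // CoxeterWeakLe cs v (cs.wordProd l)} :=
    fun T => ⟨cs.wordProd (WeakPOI.sub l T), hwle T⟩ with hΦ
  have hrefl : ∀ T U : Finset (Fin l.length),
      cs.wordProd (WeakPOI.sub l T) = cs.wordProd (WeakPOI.sub l U) →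
      CoxeterWeakLe cs (cs.wordProd (WeakPOI.sub l T)) (cs.wordProd (WeakPOI.sub l U)) := by
    intro T U h
    exact ⟨WeakPOI.sub l U, WeakPOI.sub l U,
      WeakPOI.isReduced_sub cs l hnd hcomm _ U rfl, rfl,
      WeakPOI.isReduced_sub cs l hnd hcomm _ U rfl, h.symm, List.prefix_rfl⟩
  have hbij : Function.Bijective Φ := by
    constructor
    · intro T U h
      have hval : cs.wordProd (WeakPOI.sub l T) = cs.wordProd (WeakPOI.sub l U) :=
        congrArg Subtype.val h
      exact Finset.Subset.antisymm
        (key_ge T U (hrefl T U hval))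
        (key_ge U T (hrefl U T hval.symm))
    · rintro ⟨v, hv⟩
      obtain ⟨T, rfl⟩ := WeakPOI.exists_sub_of_weakle cs l hnd hcomm hv
      exact ⟨T, rfl⟩
  refine ⟨(Equiv.ofBijective Φ hbij).symm, ?_⟩
  intro a b
  have ha : Φ ((Equiv.ofBijective Φ hbij).symm a) = a := (Equiv.ofBijective Φ hbij).apply_symm_apply a
  have hb : Φ ((Equiv.ofBijective Φ hbij).symm b) = b := (Equiv.ofBijective Φ hbij).apply_symm_apply b
  have ha1 : a.1 = cs.wordProd (WeakPOI.sub l ((Equiv.ofBijective Φ hbij).symm a)) :=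
    (congrArg Subtype.val ha).symm
  have hb1 : b.1 = cs.wordProd (WeakPOI.sub l ((Equiv.ofBijective Φ hbij).symm b)) :=
    (congrArg Subtype.val hb).symm
  rw [ha1, hb1]
  constructor
  · exact key_ge _ _
  · exact key_le _ _
end

section
/- The number of permutations in S_n avoiding both patterns 321 and 3412 is the Fibonacci number F_{2n-1}, with indexing F_0 = 0, F_1 = 1. -/
namespace BoolPerm
open Equiv Fin

/-- extension fixing the last point -/
def ext {n : ℕ} (w : Perm (Fin n)) : Perm (Fin (n + 1)) where
  toFun := fun x => Fin.lastCases (Fin.last n) (fun i => (w i).castSucc) x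
  invFun := fun x => Fin.lastCases (Fin.last n) (fun i => (w⁻¹ i).castSucc) x
  left_inv := by
    intro x
    cases x using Fin.lastCases with
    | last => simp
    | cast i => simp
  right_inv := by
    intro x
    cases x using Fin.lastCases with
    | last => simp
    | cast i => simp

@[simp] lemma ext_castSucc {n : ℕ} (w : Perm (Fin n)) (i : Fin n) :
    ext w i.castSucc = (w i).castSucc := by
  simp [ext, Equiv.coe_fn_mk]

@[simp] lemma ext_last {n : ℕ} (w : Perm (Fin n)) : ext w (Fin.last n) = Fin.last n := by
  simp [ext, Equiv.coe_fn_mk]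

/-- restriction of a perm fixing the last point -/
def res {n : ℕ} (W : Perm (Fin (n + 1))) (hW : W (Fin.last n) = Fin.last n) :
    Perm (Fin n) where
  toFun := fun i => (W i.castSucc).castPred (by
    intro h
    exact (Fin.castSucc_lt_last i).ne (W.injective (h.trans hW.symm)))
  invFun := fun i => (W⁻¹ i.castSucc).castPred (by
    intro h
    have : i.castSucc = Fin.last n := by
      have := congrArg W h
      rwa [Equiv.Perm.coe_inv, Equiv.apply_symm_apply, hW] at this
    exact (Fin.castSucc_lt_last i).ne this)
  left_inv := by intro i; apply Fin.castSucc_injective; simp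
  right_inv := by intro i; apply Fin.castSucc_injective; simp

@[simp] lemma res_apply {n : ℕ} (W : Perm (Fin (n + 1))) (hW) (i : Fin n) :
    ((res W hW) i).castSucc = W i.castSucc := by
  simp [res, Equiv.coe_fn_mk]

lemma ext_res {n : ℕ} (W : Perm (Fin (n + 1))) (hW : W (Fin.last n) = Fin.last n) :
    ext (res W hW) = W := by
  apply Equiv.ext
  intro x
  cases x using Fin.lastCases with
  | last => simp [hW]
  | cast i => simp

lemma ext_injective {n : ℕ} : Function.Injective (ext (n := n)) := by
  intro w w' h
  apply Equiv.ext
  intro i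
  have := congrArg (fun f : Perm (Fin (n+1)) => f i.castSucc) h
  simpa using this

section lift
variable {m m' : ℕ} {w : Perm (Fin m)} {W : Perm (Fin m')} {ρ φ : Fin m → Fin m'}

lemma lift321 (hρ : StrictMono ρ) (hφ : StrictMono φ)
    (h : ∀ i, W (ρ i) = φ (w i)) : Contains321 w → Contains321 W := by
  rintro ⟨i, j, k, hij, hjk, h1, h2⟩
  exact ⟨ρ i, ρ j, ρ k, hρ hij, hρ hjk, by rw [h, h]; exact hφ h1, by rw [h, h]; exact hφ h2⟩

lemma lift3412 (hρ : StrictMono ρ) (hφ : StrictMono φ)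
    (h : ∀ i, W (ρ i) = φ (w i)) : Contains3412 w → Contains3412 W := by
  rintro ⟨i, j, k, l, hij, hjk, hkl, h1, h2, h3⟩
  exact ⟨ρ i, ρ j, ρ k, ρ l, hρ hij, hρ hjk, hρ hkl,
    by rw [h, h]; exact hφ h1, by rw [h, h]; exact hφ h2, by rw [h, h]; exact hφ h3⟩

lemma descend321 (hρ : StrictMono ρ) (hφ : StrictMono φ) (h : ∀ i, W (ρ i) = φ (w i))
    (hcov : ∀ x : Fin m', (∃ y z : Fin m', (x < y ∧ x < z ∨ y < x ∧ z < x ∨ y < x ∧ x < z)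
        ∧ True) → True) -- dummy, replaced below
    : True := trivial

/-- descend for 321: every witness index is in range ρ -/
lemma descend321' (hρ : StrictMono ρ) (hφ : StrictMono φ) (h : ∀ i, W (ρ i) = φ (w i))
    (hcov : ∀ x y z : Fin m', x < y → y < z → W z < W y → W y < W x →
      (∃ a, ρ a = x) ∧ (∃ a, ρ a = y) ∧ (∃ a, ρ a = z)) :
    Contains321 W → Contains321 w := by
  rintro ⟨i, j, k, hij, hjk, h1, h2⟩
  obtain ⟨⟨a, ha⟩, ⟨b, hb⟩, ⟨c, hc⟩⟩ := hcov i j k hij hjk h1 h2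
  subst ha; subst hb; subst hc
  simp only [h] at h1 h2
  exact ⟨a, b, c, hρ.lt_iff_lt.mp hij, hρ.lt_iff_lt.mp hjk,
    hφ.lt_iff_lt.mp h1, hφ.lt_iff_lt.mp h2⟩

/-- descend for 3412 -/
lemma descend3412' (hρ : StrictMono ρ) (hφ : StrictMono φ) (h : ∀ i, W (ρ i) = φ (w i))
    (hcov : ∀ x y z t : Fin m', x < y → y < z → z < t → W z < W t → W t < W x → W x < W y →
      (∃ a, ρ a = x) ∧ (∃ a, ρ a = y) ∧ (∃ a, ρ a = z) ∧ (∃ a, ρ a = t)) :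
    Contains3412 W → Contains3412 w := by
  rintro ⟨i, j, k, l, hij, hjk, hkl, h1, h2, h3⟩
  obtain ⟨⟨a, ha⟩, ⟨b, hb⟩, ⟨c, hc⟩, ⟨e, he⟩⟩ := hcov i j k l hij hjk hkl h1 h2 h3
  subst ha; subst hb; subst hc; subst he
  simp only [h] at h1 h2 h3
  exact ⟨a, b, c, e, hρ.lt_iff_lt.mp hij, hρ.lt_iff_lt.mp hjk, hρ.lt_iff_lt.mp hkl,
    hφ.lt_iff_lt.mp h1, hφ.lt_iff_lt.mp h2, hφ.lt_iff_lt.mp h3⟩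

end lift


/-- skip the second-largest element -/
def sk {m : ℕ} (x : Fin (m + 1)) : Fin (m + 2) :=
  ⟨if x.val = m then m + 1 else x.val, by split <;> omega⟩

lemma sk_strictMono {m : ℕ} : StrictMono (sk (m := m)) := by
  intro x y hxy
  have hx := x.isLt; have hy := y.isLt
  simp only [sk, Fin.lt_def] at *
  split <;> split <;> omega

lemma sk_last {m : ℕ} : sk (Fin.last m) = Fin.last (m + 1) := by
  simp [sk, Fin.last]

lemma sk_of_ne_last {m : ℕ} {i : Fin (m + 1)} (h : i ≠ Fin.last m) :
    sk i = i.castSucc := by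
  have : i.val ≠ m := fun hc => h (Fin.ext hc)
  simp [sk, Fin.ext_iff, this]

lemma sk_cover {m : ℕ} {x : Fin (m + 2)} (h : x ≠ (Fin.last m).castSucc) :
    ∃ i, sk i = x := by
  have hx := x.isLt
  have hval : x.val ≠ m := fun hc => h (Fin.ext (by simpa using hc))
  by_cases hl : x.val = m + 1
  · exact ⟨Fin.last m, by simp [sk_last, Fin.ext_iff, hl]⟩
  · exact ⟨⟨x.val, by omega⟩, by simp [sk, Fin.ext_iff]; omega⟩

lemma castSucc_strictMono {m : ℕ} : StrictMono (Fin.castSucc (n := m)) :=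
  fun _ _ h => Fin.castSucc_lt_castSucc_iff.mpr h

lemma castSucc_cover {m : ℕ} {x : Fin (m + 1)} (h : x ≠ Fin.last m) :
    ∃ i, Fin.castSucc i = x :=
  ⟨x.castPred h, Fin.castSucc_castPred x h⟩

section excl
variable {m' : ℕ} {W : Perm (Fin m')} {q : Fin m'}

lemma not321_at_max (hmax : ∀ x, W x ≤ W q) (h2 : ∀ u v : Fin m', q < u → q < v → u = v)
    {i j k : Fin m'} (hij : i < j) (hjk : j < k) (hkj : W k < W j) (hji : W j < W i) :
    i ≠ q ∧ j ≠ q ∧ k ≠ q := by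
  refine ⟨?_, ?_, ?_⟩ <;> rintro rfl
  · exact hjk.ne (h2 j k hij (hij.trans hjk))
  · exact absurd (hji.trans_le (hmax i)) (lt_irrefl _)
  · exact absurd (hkj.trans_le (hmax j)) (lt_irrefl _)

lemma not3412_at_max (hmax : ∀ x, W x ≤ W q) (h2 : ∀ u v : Fin m', q < u → q < v → u = v)
    {i j k l : Fin m'} (hij : i < j) (hjk : j < k) (hkl : k < l)
    (h1 : W k < W l) (h2' : W l < W i) (h3 : W i < W j) :
    i ≠ q ∧ j ≠ q ∧ k ≠ q ∧ l ≠ q := by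
  refine ⟨?_, ?_, ?_, ?_⟩ <;> rintro rfl
  · exact absurd (h3.trans_le (hmax j)) (lt_irrefl _)
  · exact hkl.ne (h2 k l hjk (hjk.trans hkl))
  · exact absurd (h1.trans_le (hmax l)) (lt_irrefl _)
  · exact absurd (h2'.trans_le (hmax i)) (lt_irrefl _)

lemma not321_at_last (hq : ∀ u, ¬ q < u)
    (hone : ∀ x y, W q < W x → W q < W y → x = y)
    {i j k : Fin m'} (hij : i < j) (hjk : j < k) (hkj : W k < W j) (hji : W j < W i) :
    i ≠ q ∧ j ≠ q ∧ k ≠ q := by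
  refine ⟨?_, ?_, ?_⟩ <;> rintro rfl
  · exact hq j hij
  · exact hq k hjk
  · exact hij.ne (hone i j (hkj.trans hji) hkj)

lemma not3412_at_last (hq : ∀ u, ¬ q < u)
    (hone : ∀ x y, W q < W x → W q < W y → x = y)
    {i j k l : Fin m'} (hij : i < j) (hjk : j < k) (hkl : k < l)
    (h1 : W k < W l) (h2' : W l < W i) (h3 : W i < W j) :
    i ≠ q ∧ j ≠ q ∧ k ≠ q ∧ l ≠ q := by
  refine ⟨?_, ?_, ?_, ?_⟩ <;> rintro rfl
  · exact hq j hij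
  · exact hq k hjk
  · exact (hij.trans (hjk.trans hkl)).ne' (hone l i h1 (h1.trans h2'))
  · exact hij.ne (hone i j h2' (h2'.trans h3))
end excl

section cases
variable {n : ℕ}

/-- second-to-last position / second-largest value in `Fin (n+2)` -/
abbrev cc (n : ℕ) : Fin (n + 2) := (Fin.last n).castSucc
abbrev ll (n : ℕ) : Fin (n + 2) := Fin.last (n + 1)

lemma cc_lt_ll : cc n < ll n := Fin.castSucc_lt_last _

lemma eq_ll_of_cc_lt {z : Fin (n + 2)} (h : cc n < z) : z = ll n := by
  have h1 := z.isLt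
  rw [Fin.lt_def] at h
  simp only [Fin.coe_castSucc, Fin.val_last] at h
  exact Fin.ext (by simp [Fin.val_last]; omega)

lemma unique_after_cc (u v : Fin (n + 2)) (hu : cc n < u) (hv : cc n < v) : u = v := by
  rw [eq_ll_of_cc_lt hu, eq_ll_of_cc_lt hv]

/-! ### Case 1 : `W = ext w` -/

lemma contains321_ext_iff (w : Perm (Fin n)) : Contains321 (ext w) ↔ Contains321 w := by
  constructor
  · refine descend321' castSucc_strictMono castSucc_strictMono (fun i => ext_castSucc w i) ?_
    intro x y z hxy hyz h1 h2
    have hz : z ≠ Fin.last n := by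
      rintro rfl
      rw [ext_last] at h1
      exact absurd h1 (Fin.not_lt.mpr (Fin.le_last _))
    have hy : y ≠ Fin.last n := fun hc => (Fin.not_lt.mpr (Fin.le_last z)) (hc ▸ hyz)
    have hx : x ≠ Fin.last n := fun hc => (Fin.not_lt.mpr (Fin.le_last y)) (hc ▸ hxy)
    exact ⟨castSucc_cover hx, castSucc_cover hy, castSucc_cover hz⟩
  · exact lift321 castSucc_strictMono castSucc_strictMono (fun i => ext_castSucc w i)

lemma contains3412_ext_iff (w : Perm (Fin n)) : Contains3412 (ext w) ↔ Contains3412 w := by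
  constructor
  · refine descend3412' castSucc_strictMono castSucc_strictMono (fun i => ext_castSucc w i) ?_
    intro x y z t hxy hyz hzt h1 h2 h3
    have ht : t ≠ Fin.last n := by
      rintro rfl
      rw [ext_last] at h2
      exact absurd h2 (Fin.not_lt.mpr (Fin.le_last _))
    have hz : z ≠ Fin.last n := fun hc => (Fin.not_lt.mpr (Fin.le_last t)) (hc ▸ hzt)
    have hy : y ≠ Fin.last n := fun hc => (Fin.not_lt.mpr (Fin.le_last z)) (hc ▸ hyz)
    have hx : x ≠ Fin.last n := fun hc => (Fin.not_lt.mpr (Fin.le_last y)) (hc ▸ hxy)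
    exact ⟨castSucc_cover hx, castSucc_cover hy, castSucc_cover hz, castSucc_cover ht⟩
  · exact lift3412 castSucc_strictMono castSucc_strictMono (fun i => ext_castSucc w i)

/-! ### Case 2 : `W = ext w * swap (cc n) (ll n)`, inserting the max before the last entry -/

def W2 (w : Perm (Fin (n + 1))) : Perm (Fin (n + 2)) := ext w * Equiv.swap (cc n) (ll n)

lemma W2_rel (w : Perm (Fin (n + 1))) (i : Fin (n + 1)) : W2 w (sk i) = (w i).castSucc := by
  by_cases h : i = Fin.last n
  · subst h
    rw [sk_last, W2]
    simp only [Equiv.Perm.mul_apply]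
    rw [Equiv.swap_apply_right]
    exact ext_castSucc w (Fin.last n)
  · rw [sk_of_ne_last h, W2]
    simp only [Equiv.Perm.mul_apply]
    rw [Equiv.swap_apply_of_ne_of_ne (by
        simpa [Fin.castSucc_inj] using h)
      (Fin.ne_of_lt (Fin.castSucc_lt_last _))]
    exact ext_castSucc w i

lemma W2_cc (w : Perm (Fin (n + 1))) : W2 w (cc n) = ll n := by
  rw [W2]
  simp only [Equiv.Perm.mul_apply, Equiv.swap_apply_left]
  exact ext_last w

lemma W2_max (w : Perm (Fin (n + 1))) (x : Fin (n + 2)) : W2 w x ≤ W2 w (cc n) := by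
  rw [W2_cc]; exact Fin.le_last _

lemma contains321_W2_iff (w : Perm (Fin (n + 1))) : Contains321 (W2 w) ↔ Contains321 w := by
  constructor
  · refine descend321' sk_strictMono castSucc_strictMono (W2_rel w) ?_
    intro x y z hxy hyz h1 h2
    obtain ⟨hx, hy, hz⟩ := not321_at_max (W2_max w) unique_after_cc hxy hyz h1 h2
    exact ⟨sk_cover hx, sk_cover hy, sk_cover hz⟩
  · exact lift321 sk_strictMono castSucc_strictMono (W2_rel w)

lemma contains3412_W2_iff (w : Perm (Fin (n + 1))) : Contains3412 (W2 w) ↔ Contains3412 w := by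
  constructor
  · refine descend3412' sk_strictMono castSucc_strictMono (W2_rel w) ?_
    intro x y z t hxy hyz hzt h1 h2 h3
    obtain ⟨hx, hy, hz, ht⟩ := not3412_at_max (W2_max w) unique_after_cc hxy hyz hzt h1 h2 h3
    exact ⟨sk_cover hx, sk_cover hy, sk_cover hz, sk_cover ht⟩
  · exact lift3412 sk_strictMono castSucc_strictMono (W2_rel w)

/-! ### Case 3 : `W = swap (cc n) (ll n) * ext w` -/

def W3 (w : Perm (Fin (n + 1))) : Perm (Fin (n + 2)) := Equiv.swap (cc n) (ll n) * ext w

lemma W3_rel (w : Perm (Fin (n + 1))) (i : Fin (n + 1)) : W3 w i.castSucc = sk (w i) := by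
  rw [W3]
  simp only [Equiv.Perm.mul_apply]
  rw [ext_castSucc]
  by_cases h : w i = Fin.last n
  · rw [h, Equiv.swap_apply_left, sk_last]
  · rw [Equiv.swap_apply_of_ne_of_ne (by simpa [Fin.castSucc_inj] using h)
      (Fin.ne_of_lt (Fin.castSucc_lt_last _)), sk_of_ne_last h]

lemma W3_ll (w : Perm (Fin (n + 1))) : W3 w (ll n) = cc n := by
  rw [W3]
  simp only [Equiv.Perm.mul_apply]
  rw [ext_last, Equiv.swap_apply_right]

lemma W3_one (w : Perm (Fin (n + 1))) (x y : Fin (n + 2))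
    (hx : W3 w (ll n) < W3 w x) (hy : W3 w (ll n) < W3 w y) : x = y := by
  rw [W3_ll] at hx hy
  exact (W3 w).injective ((eq_ll_of_cc_lt hx).trans (eq_ll_of_cc_lt hy).symm)

lemma not_ll_lt (u : Fin (n + 2)) : ¬ ll n < u := Fin.not_lt.mpr (Fin.le_last _)

lemma contains321_W3_iff (w : Perm (Fin (n + 1))) : Contains321 (W3 w) ↔ Contains321 w := by
  constructor
  · refine descend321' castSucc_strictMono sk_strictMono (W3_rel w) ?_
    intro x y z hxy hyz h1 h2
    obtain ⟨hx, hy, hz⟩ := not321_at_last (fun u => not_ll_lt u) (W3_one w) hxy hyz h1 h2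
    exact ⟨castSucc_cover hx, castSucc_cover hy, castSucc_cover hz⟩
  · exact lift321 castSucc_strictMono sk_strictMono (W3_rel w)

lemma contains3412_W3_iff (w : Perm (Fin (n + 1))) : Contains3412 (W3 w) ↔ Contains3412 w := by
  constructor
  · refine descend3412' castSucc_strictMono sk_strictMono (W3_rel w) ?_
    intro x y z t hxy hyz hzt h1 h2 h3
    obtain ⟨hx, hy, hz, ht⟩ :=
      not3412_at_last (fun u => not_ll_lt u) (W3_one w) hxy hyz hzt h1 h2 h3
    exact ⟨castSucc_cover hx, castSucc_cover hy, castSucc_cover hz, castSucc_cover ht⟩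
  · exact lift3412 castSucc_strictMono sk_strictMono (W3_rel w)

end cases
section key
variable {n : ℕ}

/-- Key structural lemma: in an avoider with `W ll ≠ ll` and `W cc ≠ ll`,
the last value must be the second largest. -/
lemma key_last (W : Perm (Fin (n + 2))) (h321 : ¬Contains321 W) (h3412 : ¬Contains3412 W)
    (h1 : W (ll n) ≠ ll n) (h2 : W (cc n) ≠ ll n) : W (ll n) = cc n := by
  set p := W⁻¹ (ll n) with hp
  have hWp : W p = ll n := Equiv.apply_symm_apply W (ll n)
  have hp_l : p ≠ ll n := fun hc => h1 (hc ▸ hWp)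
  have hp_c : p ≠ cc n := fun hc => h2 (hc ▸ hWp)
  have hpval : p.val < n := by
    have := p.isLt
    have e1 : p.val ≠ n + 1 := fun hc => hp_l (Fin.ext (by simpa using hc))
    have e2 : p.val ≠ n := fun hc => hp_c (Fin.ext (by simpa using hc))
    omega
  have step1 : ∀ j k : Fin (n + 2), p < j → j < k → W j < W k := by
    intro j k hpj hjk
    by_contra hc
    have hkj : W k < W j :=
      lt_of_le_of_ne (Fin.not_lt.mp hc) (fun h => hjk.ne (W.injective h.symm))
    have hjp : W j < W p := by
      rw [hWp]
      exact lt_of_le_of_ne (Fin.le_last _) (fun h => hpj.ne (W.injective (h.trans hWp.symm)).symm)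
    exact h321 ⟨p, j, k, hpj, hjk, hkj, hjp⟩
  by_contra hne
  set q := W⁻¹ (cc n) with hq
  have hWq : W q = cc n := Equiv.apply_symm_apply W (cc n)
  have hq_ll : q ≠ ll n := fun hc => hne (hc ▸ hWq)
  have hq_p : q ≠ p := fun hc => (Fin.ne_of_lt cc_lt_ll) (by rw [← hWq, hc, hWp])
  rcases lt_or_gt_of_ne hq_p with hlt | hgt
  · -- q < p : build a 3412 pattern (q, p, p+1, ll)
    set p' : Fin (n + 2) := ⟨p.val + 1, by omega⟩ with hp'
    have hpp' : p < p' := by rw [Fin.lt_def]; simp [hp']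
    have hp'll : p' < ll n := by rw [Fin.lt_def]; simp [hp', Fin.val_last]; omega
    have hWll_lt : W (ll n) < cc n := by
      rw [Fin.lt_def]
      have := (W (ll n)).isLt
      have e1 : (W (ll n)).val ≠ n + 1 := fun hc => h1 (Fin.ext (by simpa using hc))
      have e2 : (W (ll n)).val ≠ n := fun hc => hne (Fin.ext (by simpa using hc))
      simpa using by omega
    exact h3412 ⟨q, p, p', ll n, hlt, hpp', hp'll,
      step1 p' (ll n) hpp' hp'll,
      by rw [hWq]; exact hWll_lt,
      by rw [hWq, hWp]; exact cc_lt_ll⟩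
  · -- p < q
    have hqll : q < ll n := lt_of_le_of_ne (Fin.le_last _) hq_ll
    have := step1 q (ll n) hgt hqll
    rw [hWq] at this
    exact h1 (eq_ll_of_cc_lt this)
end key
section counting

abbrev Av {n : ℕ} (w : Perm (Fin n)) : Prop := ¬Contains321 w ∧ ¬Contains3412 w

lemma av_ext_iff {n : ℕ} (w : Perm (Fin n)) : Av (ext w) ↔ Av w := by
  unfold Av
  rw [contains321_ext_iff, contains3412_ext_iff]

lemma av_W2_iff {n : ℕ} (w : Perm (Fin (n + 1))) : Av (W2 w) ↔ Av w := by
  unfold Av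
  rw [contains321_W2_iff, contains3412_W2_iff]

lemma av_W3_iff {n : ℕ} (w : Perm (Fin (n + 1))) : Av (W3 w) ↔ Av w := by
  unfold Av
  rw [contains321_W3_iff, contains3412_W3_iff]

lemma card_case1 (n : ℕ) :
    Nat.card {W : Perm (Fin (n + 1)) // Av W ∧ W (Fin.last n) = Fin.last n} =
      Nat.card {w : Perm (Fin n) // Av w} := by
  refine (Nat.card_eq_of_bijective
    (fun w => (⟨ext w.1, (av_ext_iff w.1).mpr w.2, ext_last w.1⟩ :
      {W : Perm (Fin (n + 1)) // Av W ∧ W (Fin.last n) = Fin.last n})) ⟨?_, ?_⟩).symm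
  · intro w w' h
    exact Subtype.ext (ext_injective (congrArg Subtype.val h))
  · rintro ⟨W, hAv, hfix⟩
    refine ⟨⟨res W hfix, ?_⟩, ?_⟩
    · rw [← av_ext_iff, ext_res]; exact hAv
    · exact Subtype.ext (ext_res W hfix)

lemma card_case2 (n : ℕ) :
    Nat.card {W : Perm (Fin (n + 2)) // Av W ∧ W (cc n) = ll n} =
      Nat.card {w : Perm (Fin (n + 1)) // Av w} := by
  refine (Nat.card_eq_of_bijective
    (fun w => (⟨W2 w.1, (av_W2_iff w.1).mpr w.2, W2_cc w.1⟩ :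
      {W : Perm (Fin (n + 2)) // Av W ∧ W (cc n) = ll n})) ⟨?_, ?_⟩).symm
  · intro w w' h
    have h2 : W2 w.1 = W2 w'.1 := congrArg Subtype.val h
    have : ext w.1 = ext w'.1 := mul_right_cancel h2
    exact Subtype.ext (ext_injective this)
  · rintro ⟨W, hAv, hc⟩
    have hVfix : (W * Equiv.swap (cc n) (ll n)) (Fin.last (n + 1)) = Fin.last (n + 1) := by
      simp only [Equiv.Perm.mul_apply]
      rw [show Fin.last (n + 1) = ll n from rfl, Equiv.swap_apply_right]
      exact hc
    refine ⟨⟨res _ hVfix, ?_⟩, ?_⟩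
    · rw [← av_W2_iff]
      have : W2 (res _ hVfix) = W := by
        rw [W2, ext_res, mul_assoc, Equiv.swap_mul_self, mul_one]
      rw [this]; exact hAv
    · refine Subtype.ext ?_
      show W2 (res _ hVfix) = W
      rw [W2, ext_res, mul_assoc, Equiv.swap_mul_self, mul_one]

lemma card_case3 (n : ℕ) :
    Nat.card {W : Perm (Fin (n + 2)) // Av W ∧ W (ll n) ≠ ll n ∧ W (cc n) ≠ ll n} =
      Nat.card {w : Perm (Fin (n + 1)) // Av w ∧ w (Fin.last n) ≠ Fin.last n} := by
  refine (Nat.card_eq_of_bijective (fun (w : {w : Perm (Fin (n + 1)) // Av w ∧ w (Fin.last n) ≠ Fin.last n}) => (⟨W3 w.1, (av_W3_iff w.1).mpr w.2.1, by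
      rw [W3_ll]; exact Fin.ne_of_lt cc_lt_ll, by
      rw [show cc n = (Fin.last n).castSucc from rfl, W3_rel]
      rw [sk_of_ne_last w.2.2]
      exact Fin.ne_of_lt (Fin.castSucc_lt_last _)⟩ :
      {W : Perm (Fin (n + 2)) // Av W ∧ W (ll n) ≠ ll n ∧ W (cc n) ≠ ll n})) ⟨?_, ?_⟩).symm
  · intro w w' h
    have h2 : W3 w.1 = W3 w'.1 := congrArg Subtype.val h
    have : ext w.1 = ext w'.1 := mul_left_cancel h2
    exact Subtype.ext (ext_injective this)
  · rintro ⟨W, hAv, hl, hc⟩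
    have hkey : W (ll n) = cc n := key_last W hAv.1 hAv.2 hl hc
    have hVfix : (Equiv.swap (cc n) (ll n) * W) (Fin.last (n + 1)) = Fin.last (n + 1) := by
      simp only [Equiv.Perm.mul_apply]
      rw [show Fin.last (n + 1) = ll n from rfl, hkey, Equiv.swap_apply_left]
    have hW3 : W3 (res _ hVfix) = W := by
      rw [W3, ext_res, ← mul_assoc, Equiv.swap_mul_self, one_mul]
    refine ⟨⟨res _ hVfix, ?_, ?_⟩, Subtype.ext hW3⟩
    · rw [← av_W3_iff, hW3]; exact hAv
    · intro hfix
      have h1 := res_apply _ hVfix (Fin.last n)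
      rw [hfix] at h1
      simp only [Equiv.Perm.mul_apply] at h1
      have h3 : (Equiv.swap (cc n) (ll n)) (W (cc n)) = cc n := h1.symm
      have h4 := congrArg (Equiv.swap (cc n) (ll n)) h3
      rw [Equiv.swap_apply_self, Equiv.swap_apply_left] at h4
      exact hc h4

end counting
section final

lemma card_split {α : Type*} [Finite α] (p q : α → Prop) :
    Nat.card {x // p x} = Nat.card {x // p x ∧ q x} + Nat.card {x // p x ∧ ¬q x} := by
  classical
  calc Nat.card {x // p x}
      = Nat.card ({y : {x // p x} // q y.1} ⊕ {y : {x // p x} // ¬q y.1}) :=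
        (Nat.card_congr (Equiv.sumCompl _)).symm
    _ = _ := by
        rw [Nat.card_sum]
        congr 1
        · exact Nat.card_congr (Equiv.subtypeSubtypeEquivSubtypeInter p q)
        · exact Nat.card_congr (Equiv.subtypeSubtypeEquivSubtypeInter p (fun x => ¬q x))

noncomputable def a (n : ℕ) : ℕ := Nat.card {w : Perm (Fin n) // Av w}

noncomputable def d (n : ℕ) : ℕ :=
  Nat.card {W : Perm (Fin (n + 1)) // Av W ∧ W (Fin.last n) ≠ Fin.last n}

lemma a_succ (n : ℕ) : a (n + 1) = a n + d n := by
  rw [a, card_split (fun W : Perm (Fin (n + 1)) => Av W)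
    (fun W => W (Fin.last n) = Fin.last n), card_case1]
  rfl

lemma d_succ (n : ℕ) : d (n + 1) = a (n + 1) + d n := by
  rw [d, card_split (fun W : Perm (Fin (n + 2)) => Av W ∧ W (Fin.last (n + 1)) ≠ Fin.last (n + 1))
    (fun W => W (cc n) = ll n)]
  congr 1
  · have e : Nat.card {W : Perm (Fin (n + 2)) //
        (Av W ∧ W (Fin.last (n + 1)) ≠ Fin.last (n + 1)) ∧ W (cc n) = ll n} =
        Nat.card {W : Perm (Fin (n + 2)) // Av W ∧ W (cc n) = ll n} := by
      apply Nat.card_congr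
      apply Equiv.subtypeEquivRight
      intro W
      constructor
      · rintro ⟨⟨hAv, _⟩, hq⟩; exact ⟨hAv, hq⟩
      · rintro ⟨hAv, hq⟩
        refine ⟨⟨hAv, ?_⟩, hq⟩
        intro hfix
        exact (Fin.ne_of_lt cc_lt_ll) (W.injective (hq.trans hfix.symm))
    exact e.trans (card_case2 n)
  · have e : Nat.card {W : Perm (Fin (n + 2)) //
        (Av W ∧ W (Fin.last (n + 1)) ≠ Fin.last (n + 1)) ∧ ¬W (cc n) = ll n} =
        Nat.card {W : Perm (Fin (n + 2)) // Av W ∧ W (ll n) ≠ ll n ∧ W (cc n) ≠ ll n} := by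
      apply Nat.card_congr
      apply Equiv.subtypeEquivRight
      intro W
      exact and_assoc
    exact e.trans (card_case3 n)

lemma a_zero : a 0 = 1 := by
  have hall : ∀ w : Perm (Fin 0), Av w := by
    intro w
    constructor
    · rintro ⟨i, -⟩; exact i.elim0
    · rintro ⟨i, -⟩; exact i.elim0
  rw [a, Nat.card_congr (Equiv.subtypeUnivEquiv hall)]
  simp [Nat.card_eq_fintype_card]

lemma d_zero : d 0 = 0 := by
  have : IsEmpty {W : Perm (Fin 1) // Av W ∧ W (Fin.last 0) ≠ Fin.last 0} :=
    ⟨fun x => x.2.2 (Subsingleton.elim _ _)⟩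
  rw [d]
  exact Nat.card_of_isEmpty

lemma main_fib : ∀ n : ℕ, a (n + 1) = Nat.fib (2 * n + 1) ∧ d n = Nat.fib (2 * n) := by
  intro n
  induction n with
  | zero => simp [a_succ, a_zero, d_zero]
  | succ n ih =>
    obtain ⟨ha, hd⟩ := ih
    have hd' : d (n + 1) = Nat.fib (2 * (n + 1)) := by
      rw [d_succ, ha, hd, show 2 * (n + 1) = 2 * n + 2 by ring, Nat.fib_add_two, Nat.add_comm]
    refine ⟨?_, hd'⟩
    rw [a_succ, ha, hd', show 2 * (n + 1) + 1 = (2 * n + 1) + 2 by ring, Nat.fib_add_two,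
      show 2 * (n + 1) = 2 * n + 1 + 1 by ring]

end final
end BoolPerm

/-- The number of permutations in `S_n` avoiding both `321` and `3412` is the
Fibonacci number `F_{2n-1}`. -/
theorem card_boolean_permutations (n : ℕ) (hn : 1 ≤ n) :
    Nat.card {w : Equiv.Perm (Fin n) // ¬Contains321 w ∧ ¬Contains3412 w} =
      Nat.fib (2 * n - 1) := by
  obtain ⟨m, rfl⟩ : ∃ m, n = m + 1 := ⟨n - 1, by omega⟩
  have := (BoolPerm.main_fib m).1
  rw [show 2 * (m + 1) - 1 = 2 * m + 1 by omega]
  exact this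
end

section
/- For all n ≥ 1, the sum over k from 1 to n-1 of F_{k+1}·F_{n-k+1} equals ((n+1)·F_{n+3} + (n-7)·F_{n+1})/5, where F_i denotes the i-th Fibonacci number with F_0 = 0, F_1 = 1. -/
private def fibS (m : ℕ) : ℤ :=
  ∑ j ∈ Finset.range m, (Nat.fib (j + 2) * Nat.fib (m + 1 - j) : ℤ)

private lemma fibS_rec (m : ℕ) :
    fibS (m + 2) = fibS (m + 1) + fibS m + Nat.fib (m + 4) := by
  have split : fibS (m + 2) =
      (∑ j ∈ Finset.range (m + 2), (Nat.fib (j + 2) * Nat.fib (m + 2 - j) : ℤ)) +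
      (∑ j ∈ Finset.range (m + 2), (Nat.fib (j + 2) * Nat.fib (m + 1 - j) : ℤ)) := by
    rw [fibS, ← Finset.sum_add_distrib]
    refine Finset.sum_congr rfl fun j hj => ?_
    have hj' : j ≤ m + 1 := by simpa [Nat.lt_succ_iff] using Finset.mem_range.mp hj
    have h1 : m + 2 + 1 - j = (m + 1 - j) + 2 := by omega
    have h2 : m + 2 - j = (m + 1 - j) + 1 := by omega
    have h3 : (Nat.fib (m + 1 - j + 2) : ℤ) = Nat.fib (m + 1 - j + 1) + Nat.fib (m + 1 - j) := by
      rw [Nat.fib_add_two]; push_cast; ring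
    rw [h1, h2, h3, mul_add]
  have e1 : (∑ j ∈ Finset.range (m + 2), (Nat.fib (j + 2) * Nat.fib (m + 2 - j) : ℤ)) =
      fibS (m + 1) + Nat.fib (m + 3) := by
    rw [Finset.sum_range_succ, fibS]
    have : m + 2 - (m + 1) = 1 := by omega
    simp [this]
  have e2 : (∑ j ∈ Finset.range (m + 2), (Nat.fib (j + 2) * Nat.fib (m + 1 - j) : ℤ)) =
      fibS m + Nat.fib (m + 2) := by
    rw [Finset.sum_range_succ, Finset.sum_range_succ, fibS]
    have h1 : m + 1 - (m + 1) = 0 := by omega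
    have h2 : m + 1 - m = 1 := by omega
    simp [h1, h2]
  have hfib : (Nat.fib (m + 4) : ℤ) = Nat.fib (m + 3) + Nat.fib (m + 2) := by
    have := Nat.fib_add_two (n := m + 2)
    push_cast [this]
    ring
  rw [split, e1, e2, hfib]; ring

private lemma fibS_key (m : ℕ) :
    5 * fibS m = ((m : ℤ) + 2) * Nat.fib (m + 4) + ((m : ℤ) - 6) * Nat.fib (m + 2) := by
  induction m using Nat.strong_induction_on with
  | _ m ih =>
    match m with
    | 0 => simp [fibS]; decide
    | 1 => simp [fibS]; decide
    | (m + 2) =>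
      have h0 := ih m (by omega)
      have h1 := ih (m + 1) (by omega)
      rw [fibS_rec]
      have f1 : (Nat.fib (m + 6) : ℤ) = Nat.fib (m + 5) + Nat.fib (m + 4) := by
        have := Nat.fib_add_two (n := m + 4); push_cast [this]; ring
      have f2 : (Nat.fib (m + 5) : ℤ) = Nat.fib (m + 4) + Nat.fib (m + 3) := by
        have := Nat.fib_add_two (n := m + 3); push_cast [this]; ring
      have f3 : (Nat.fib (m + 4) : ℤ) = Nat.fib (m + 3) + Nat.fib (m + 2) := by
        have := Nat.fib_add_two (n := m + 2); push_cast [this]; ring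
      push_cast at h0 h1 ⊢
      push_cast [f1, f2, f3] at *
      linarith

/-- For `n ≥ 1`, `∑_{k=1}^{n-1} F_{k+1} F_{n-k+1} = ((n+1) F_{n+3} + (n-7) F_{n+1}) / 5`. -/
theorem fib_convolution_identity (n : ℕ) (hn : 1 ≤ n) :
    (∑ k ∈ Finset.Icc 1 (n - 1), (Nat.fib (k + 1) * Nat.fib (n - k + 1) : ℤ)) =
      (((n : ℤ) + 1) * Nat.fib (n + 3) + ((n : ℤ) - 7) * Nat.fib (n + 1)) / 5 := by
  obtain ⟨m, rfl⟩ : ∃ m, n = m + 1 := ⟨n - 1, by omega⟩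
  have hsum : (∑ k ∈ Finset.Icc 1 (m + 1 - 1), (Nat.fib (k + 1) * Nat.fib (m + 1 - k + 1) : ℤ))
      = fibS m := by
    rw [show m + 1 - 1 = m from rfl, fibS]
    refine Finset.sum_nbij' (fun k => k - 1) (fun j => j + 1) ?_ ?_ ?_ ?_ ?_
    · intro k hk; simp only [Finset.mem_Icc] at hk; simp only [Finset.mem_range]; omega
    · intro j hj; simp only [Finset.mem_range] at hj; simp only [Finset.mem_Icc]; omega
    · intro k hk; simp only [Finset.mem_Icc] at hk; show k - 1 + 1 = k; omega
    · intro j hj; simp only [Finset.mem_range] at hj; show j + 1 - 1 = j; omega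
    · intro k hk; simp only [Finset.mem_Icc] at hk
      have h1 : k - 1 + 2 = k + 1 := by omega
      have h2 : m + 1 - (k - 1) = m + 1 - k + 1 := by omega
      rw [h1, h2]
  rw [hsum]
  have key := fibS_key m
  have : (((m : ℤ) + 1) + 1) * Nat.fib (m + 1 + 3) + (((m : ℤ) + 1) - 7) * Nat.fib (m + 1 + 1)
      = 5 * fibS m := by
    rw [key]; ring_nf
  push_cast at this
  push_cast
  rw [this, Int.mul_ediv_cancel_left _ (by norm_num)]
end
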